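/- arXiv:2201.06184 — 3 statements merged into one kernel-verified Lean document; each statement's English description precedes it below -/
import Mathlib

section
/- Unconditionally, for every real x > 2, ∫_2^x (θ(t) − t)/t² dt < 0. -/
open MeasureTheory Filter

/-- `theta x = ∑_{p ≤ x} log p`, the Chebyshev theta function. -/
noncomputable def theta (x : ℝ) : ℝ :=
  ∑ p ∈ Finset.filter Nat.Prime (Finset.range (⌊x⌋₊ + 1)), Real.log p

lemma theta_mono : Monotone theta := by
  intro a b hab
  apply Finset.sum_le_sum_of_subset_of_nonneg
  · exact Finset.filter_subset_filter _
      (Finset.range_subset_range.2 (by have := Nat.floor_le_floor hab; omega))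
  · intro p hp _
    exact Real.log_nonneg (by exact_mod_cast (Finset.mem_filter.1 hp).2.one_lt.le)


lemma contOn_inv_sq {a b : ℝ} (ha : 0 < a) (hb : 0 < b) :
    ContinuousOn (fun t : ℝ => (t ^ 2)⁻¹) (Set.uIcc a b) := by
  apply ContinuousOn.inv₀ (by fun_prop)
  intro t ht
  have : 0 < t := lt_of_lt_of_le (lt_min ha hb) ht.1
  positivity

lemma integrable_aux' (a b : ℝ) (ha : 0 < a) (hb : 0 < b) :
    IntervalIntegrable (fun t => (theta t - t) / t ^ 2) volume a b := by
  have h1 : IntervalIntegrable theta volume a b :=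
    (theta_mono.monotoneOn _).intervalIntegrable
  have h1' : IntervalIntegrable (fun t => theta t * (t ^ 2)⁻¹) volume a b :=
    h1.mul_continuousOn (contOn_inv_sq ha hb)
  have h2 : IntervalIntegrable (fun t : ℝ => t * (t ^ 2)⁻¹) volume a b := by
    apply ContinuousOn.intervalIntegrable
    exact continuousOn_id.mul (contOn_inv_sq ha hb)
  have := h1'.sub h2
  convert this using 2 with t
  ring

lemma integrable_ind (a b c L : ℝ) (hL : 0 ≤ L) (ha : 0 < a) (hb : 0 < b) :
    IntervalIntegrable (fun t => (if c ≤ t then L else 0) * (t ^ 2)⁻¹) volume a b := by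
  have hm : Monotone (fun t : ℝ => if c ≤ t then L else 0) := by
    intro s t hst
    by_cases h : c ≤ s
    · simp [h, h.trans hst]
    · simp only [if_neg h]
      split <;> simp [hL]
  exact (hm.monotoneOn _).intervalIntegrable.mul_continuousOn (contOn_inv_sq ha hb)

lemma theta_eq_sum_ite (x t : ℝ) (h0 : 0 ≤ t) (htx : t ≤ x) :
    theta t = ∑ p ∈ Finset.filter Nat.Prime (Finset.range (⌊x⌋₊ + 1)),
      (if (p : ℝ) ≤ t then Real.log p else 0) := by
  rw [← Finset.sum_filter]
  unfold theta
  apply Finset.sum_congr _ (fun _ _ => rfl)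
  ext p
  simp only [Finset.mem_filter, Finset.mem_range]
  constructor
  · rintro ⟨hp, hprime⟩
    have hle : p ≤ ⌊t⌋₊ := by omega
    have : (p : ℝ) ≤ t := (Nat.le_floor_iff h0).mp hle
    refine ⟨⟨?_, hprime⟩, this⟩
    have : p ≤ ⌊x⌋₊ := Nat.le_floor (this.trans htx)
    omega
  · rintro ⟨⟨_, hprime⟩, hle⟩
    have : p ≤ ⌊t⌋₊ := Nat.le_floor hle
    exact ⟨by omega, hprime⟩

lemma integral_inv_sq' (a b : ℝ) (ha : 0 < a) (hab : a ≤ b) :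
    ∫ t in a..b, (t ^ 2)⁻¹ = a⁻¹ - b⁻¹ := by
  have h0 : (0:ℝ) ∉ Set.uIcc a b := by
    rw [Set.uIcc_of_le hab]
    intro h
    exact absurd h.1 (not_le.2 ha)
  have h := integral_zpow (n := -2) (a := a) (b := b) (Or.inr ⟨by norm_num, h0⟩)
  have e : (fun t : ℝ => (t ^ 2)⁻¹) = fun t : ℝ => t ^ (-2 : ℤ) := by
    funext t
    rw [zpow_neg, show (2:ℤ) = ((2:ℕ):ℤ) by norm_num, zpow_natCast]
  rw [e, h]
  norm_num
  ring

lemma integral_ind_eval (p x L : ℝ) (h2p : 2 ≤ p) (hpx : p ≤ x) (hL : 0 ≤ L) :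
    ∫ t in (2:ℝ)..x, (if p ≤ t then L else 0) * (t ^ 2)⁻¹ = L * (p⁻¹ - x⁻¹) := by
  have hi1 := integrable_ind 2 p p L hL (by norm_num) (by linarith)
  have hi2 := integrable_ind p x p L hL (by linarith) (by linarith)
  rw [← intervalIntegral.integral_add_adjacent_intervals hi1 hi2]
  have e1 : (∫ t in (2:ℝ)..p, (if p ≤ t then L else 0) * (t ^ 2)⁻¹) = 0 := by
    rw [intervalIntegral.integral_congr_ae (g := fun _ => 0)]
    · simp
    · have hne : ∀ᵐ (t : ℝ), t ≠ p := by
        rw [MeasureTheory.ae_iff]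
        simp [Real.volume_singleton]
      filter_upwards [hne] with t ht hmem
      rw [Set.uIoc_of_le (by linarith)] at hmem
      have : ¬ p ≤ t := by
        rcases hmem with ⟨_, h2⟩
        exact fun hc => ht (le_antisymm h2 hc)
      simp [this]
  have e2 : (∫ t in p..x, (if p ≤ t then L else 0) * (t ^ 2)⁻¹)
      = ∫ t in p..x, L * (t ^ 2)⁻¹ := by
    apply intervalIntegral.integral_congr
    intro t ht
    rw [Set.uIcc_of_le hpx] at ht
    simp [ht.1]
  rw [e1, e2, zero_add, intervalIntegral.integral_const_mul,
    integral_inv_sq' p x (by linarith) hpx]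

lemma prime_facts {x : ℝ} (hx : 2 ≤ x) {p : ℕ}
    (hp : p ∈ Finset.filter Nat.Prime (Finset.range (⌊x⌋₊ + 1))) :
    2 ≤ (p : ℝ) ∧ (p : ℝ) ≤ x ∧ 0 ≤ Real.log p := by
  rw [Finset.mem_filter, Finset.mem_range] at hp
  have h2 : 2 ≤ p := hp.2.two_le
  have hle : p ≤ ⌊x⌋₊ := by omega
  have hpx : (p : ℝ) ≤ x := (Nat.le_floor_iff (by linarith)).mp hle
  exact ⟨by exact_mod_cast h2, hpx, Real.log_nonneg (by exact_mod_cast h2.trans' (by norm_num))⟩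

lemma integral_identity (x : ℝ) (hx : 2 ≤ x) :
    (∫ t in (2:ℝ)..x, (theta t - t) / t ^ 2)
      = (∑ p ∈ Finset.filter Nat.Prime (Finset.range (⌊x⌋₊ + 1)),
          Real.log p * ((p : ℝ)⁻¹ - x⁻¹)) - (Real.log x - Real.log 2) := by
  set P := Finset.filter Nat.Prime (Finset.range (⌊x⌋₊ + 1)) with hP
  have hcongr : ∀ t ∈ Set.uIcc (2:ℝ) x,
      (theta t - t) / t ^ 2
        = (∑ p ∈ P, (if (p : ℝ) ≤ t then Real.log p else 0) * (t ^ 2)⁻¹) - t⁻¹ := by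
    intro t ht
    rw [Set.uIcc_of_le hx] at ht
    have ht2 : (2:ℝ) ≤ t := ht.1
    have htne : t ≠ 0 := by linarith
    rw [← Finset.sum_mul, ← theta_eq_sum_ite x t (by linarith) ht.2]
    field_simp
  rw [intervalIntegral.integral_congr hcongr]
  have hint1 : ∀ p ∈ P, IntervalIntegrable
      (fun t => (if (p : ℝ) ≤ t then Real.log p else 0) * (t ^ 2)⁻¹) volume 2 x := by
    intro p hp
    exact integrable_ind 2 x _ _ (prime_facts hx hp).2.2 (by norm_num) (by linarith)
  have hint2 : IntervalIntegrable (fun t : ℝ => t⁻¹) volume 2 x := by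
    apply ContinuousOn.intervalIntegrable
    apply ContinuousOn.inv₀ (by fun_prop)
    intro t ht
    rw [Set.uIcc_of_le hx] at ht
    have h1 := ht.1; intro h; rw [h] at h1; linarith
  have hsum : IntervalIntegrable
      (fun t => ∑ p ∈ P, (if (p : ℝ) ≤ t then Real.log p else 0) * (t ^ 2)⁻¹) volume 2 x := by
    have h := IntervalIntegrable.sum P hint1
    have e : (∑ p ∈ P, fun t : ℝ => (if (p : ℝ) ≤ t then Real.log p else 0) * (t ^ 2)⁻¹)
        = fun t => ∑ p ∈ P, (if (p : ℝ) ≤ t then Real.log p else 0) * (t ^ 2)⁻¹ := by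
      funext t
      simp
    rwa [e] at h
  rw [intervalIntegral.integral_sub hsum hint2,
    intervalIntegral.integral_finset_sum (μ := volume) (a := 2) (b := x) (s := P) hint1,
    integral_inv (by rw [Set.uIcc_of_le hx]; intro h; linarith [h.1]),
    Real.log_div (by linarith) (by norm_num)]
  congr 1
  apply Finset.sum_congr rfl
  intro p hp
  obtain ⟨h1, h2, h3⟩ := prime_facts hx hp
  exact integral_ind_eval _ _ _ h1 h2 h3

lemma log_factorial_le (n : ℕ) (hn : 1 ≤ n) :
    Real.log (Nat.factorial n) ≤ n * Real.log n - n + 1 + Real.log n := by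
  induction n with
  | zero => omega
  | succ m ih =>
    rcases Nat.eq_or_lt_of_le hn with h | h
    · simp [← h]
    have hm : 1 ≤ m := by omega
    have ihm := ih hm
    have hm0 : (0:ℝ) < m := by exact_mod_cast hm
    have hm1 : (0:ℝ) < m + 1 := by linarith
    have hfact : (0:ℝ) < (Nat.factorial m : ℝ) := by exact_mod_cast Nat.factorial_pos m
    have hstep : Real.log (Nat.factorial (m+1) : ℕ) = Real.log (m+1) + Real.log (Nat.factorial m) := by
      rw [Nat.factorial_succ]
      push_cast
      rw [Real.log_mul (by linarith) (by linarith)]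
    have hkey : (1:ℝ) ≤ (m + 1) * (Real.log (m+1) - Real.log m) := by
      have h1 : Real.log ((m:ℝ) / (m+1)) ≤ (m:ℝ)/(m+1) - 1 :=
        Real.log_le_sub_one_of_pos (by positivity)
      rw [Real.log_div (by linarith) (by linarith)] at h1
      have h2 : (m:ℝ)/(m+1) - 1 = -(1/(m+1)) := by field_simp; ring
      rw [h2] at h1
      have h3 : (1:ℝ)/(m+1) ≤ Real.log (m+1) - Real.log m := by linarith
      calc (1:ℝ) = (m+1) * (1/(m+1)) := by field_simp
        _ ≤ (m + 1) * (Real.log (m+1) - Real.log m) := by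
            apply mul_le_mul_of_nonneg_left h3 (by linarith)
    have hlog : Real.log m ≤ Real.log (m+1) := by
      apply Real.log_le_log (by linarith) (by linarith)
    push_cast
    push_cast at hstep ihm hkey
    nlinarith [hkey]

lemma nat_prod_coprime_dvd {s : Finset ℕ} {f : ℕ → ℕ} {m : ℕ}
    (hc : Set.Pairwise s fun a b => Nat.Coprime (f a) (f b))
    (hd : ∀ p ∈ s, f p ∣ m) : (∏ p ∈ s, f p) ∣ m := by
  induction s using Finset.cons_induction with
  | empty => simpa using one_dvd m
  | cons a s ha ih =>
    rw [Finset.prod_cons]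
    have hcop : Nat.Coprime (f a) (∏ p ∈ s, f p) := by
      apply Nat.Coprime.prod_right
      intro i hi
      exact hc (Finset.mem_cons_self a s) (Finset.mem_cons_of_mem hi)
        (fun h => ha (h ▸ hi))
    exact Nat.Coprime.mul_dvd_of_dvd_of_dvd hcop
      (hd a (Finset.mem_cons_self a s))
      (ih (hc.mono (by intro y hy; simp only [Finset.coe_cons, Set.mem_insert_iff]; exact Or.inr hy)) (fun p hp => hd p (Finset.mem_cons_of_mem hp)))

lemma pow_div_dvd_factorial {p n : ℕ} (hp : p.Prime) : p ^ (n / p) ∣ Nat.factorial n := by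
  rw [Nat.Prime.pow_dvd_factorial_iff hp (Nat.lt_succ_self (Nat.log p n))]
  by_cases hpn : p ≤ n
  · have h1 : 1 ∈ Finset.Ico 1 (Nat.log p n + 1) := by
      simp only [Finset.mem_Ico]
      refine ⟨le_refl 1, ?_⟩
      have := Nat.log_pos hp.one_lt hpn
      omega
    calc n / p = n / p ^ 1 := by rw [pow_one]
      _ ≤ ∑ i ∈ Finset.Ico 1 (Nat.log p n + 1), n / p ^ i :=
          Finset.single_le_sum (f := fun i => n / p ^ i) (fun i _ => Nat.zero_le _) h1
  · have : n / p = 0 := Nat.div_eq_of_lt (by omega)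
    simp [this]

lemma prod_pow_div_dvd_factorial (n : ℕ) :
    (∏ p ∈ Finset.filter Nat.Prime (Finset.range (n + 1)), p ^ (n / p)) ∣ Nat.factorial n := by
  apply nat_prod_coprime_dvd
  · intro a ha b hb hab
    simp only [Finset.coe_filter, Set.mem_setOf_eq] at ha hb
    exact Nat.Coprime.pow _ _ ((Nat.coprime_primes ha.2 hb.2).mpr hab)
  · intro p hp
    exact pow_div_dvd_factorial (Finset.mem_filter.1 hp).2

lemma numeric16 (x : ℝ) (hx : 16 ≤ x) : 2 + Real.log x ≤ x * (1 - Real.log 2) := by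
  have L1 : Real.log 2 < 0.6931471808 := Real.log_two_lt_d9
  have L0 : 0 < Real.log 2 := Real.log_pos (by norm_num)
  have h16 : Real.log 16 = 4 * Real.log 2 := by
    rw [show (16:ℝ) = 2 ^ (4:ℕ) by norm_num, Real.log_pow]
    norm_num
  have hlog : Real.log x ≤ Real.log 16 + (x - 16) / 16 := by
    have h1 : Real.log (x / 16) ≤ x / 16 - 1 :=
      Real.log_le_sub_one_of_pos (by positivity)
    rw [Real.log_div (by linarith) (by norm_num)] at h1
    linarith
  nlinarith

lemma partB (x : ℝ) (hx : 16 ≤ x) :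
    (∑ p ∈ Finset.filter Nat.Prime (Finset.range (⌊x⌋₊ + 1)),
        Real.log p * ((p : ℝ)⁻¹ - x⁻¹)) - (Real.log x - Real.log 2) < 0 := by
  set n := ⌊x⌋₊ with hn
  set P := Finset.filter Nat.Prime (Finset.range (n + 1)) with hPdef
  have hx0 : (0:ℝ) < x := by linarith
  have hx2 : (2:ℝ) ≤ x := by linarith
  have hn16 : 16 ≤ n := Nat.le_floor (by exact_mod_cast hx)
  have h2P : 2 ∈ P := by
    rw [hPdef, Finset.mem_filter, Finset.mem_range]
    exact ⟨by omega, Nat.prime_two⟩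
  set A := ∑ p ∈ P, Real.log p * (p : ℝ)⁻¹ with hA
  set T := ∑ p ∈ P, Real.log p with hT
  set M := ∏ p ∈ P, p ^ (n / p) with hM
  -- Step 1
  have step1 : x * A < (∑ p ∈ P, Real.log p * (((n / p : ℕ) : ℝ) + 1)) := by
    rw [hA, Finset.mul_sum]
    apply Finset.sum_lt_sum_of_nonempty ⟨2, h2P⟩
    intro p hp
    obtain ⟨hp2, hpx, _⟩ := prime_facts hx2 hp
    have hlogp : 0 < Real.log p := Real.log_pos (by linarith)
    have hlt : x * (p:ℝ)⁻¹ < ((n / p : ℕ) : ℝ) + 1 := by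
      have h1 : x / p < ⌊x / p⌋₊ + 1 := Nat.lt_floor_add_one (x / p)
      rw [Nat.floor_div_natCast x p, ← hn] at h1
      rw [← div_eq_mul_inv]
      exact h1
    calc x * (Real.log p * (p:ℝ)⁻¹) = Real.log p * (x * (p:ℝ)⁻¹) := by ring
      _ < Real.log p * (((n / p : ℕ) : ℝ) + 1) := by
          exact mul_lt_mul_of_pos_left hlt hlogp
  -- Step 2
  have step2 : (∑ p ∈ P, Real.log p * (((n / p : ℕ) : ℝ) + 1)) = Real.log M + T := by
    have hlogM : Real.log M = ∑ p ∈ P, ((n / p : ℕ) : ℝ) * Real.log p := by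
      rw [hM]
      push_cast
      rw [Real.log_prod]
      · apply Finset.sum_congr rfl
        intro p hp
        rw [Real.log_pow]
      · intro p hp
        obtain ⟨hp2, _, _⟩ := prime_facts hx2 hp
        have hp0 : (0:ℝ) < (p:ℝ) := by linarith
        positivity
    rw [hlogM, hT, ← Finset.sum_add_distrib]
    apply Finset.sum_congr rfl
    intro p _
    ring
  -- Step 3
  have hMdvd : M ∣ Nat.factorial n := prod_pow_div_dvd_factorial n
  have hM1 : 1 ≤ M := by
    rw [hM]
    apply Finset.one_le_prod'
    intro p hp
    exact Nat.one_le_pow _ _ (Finset.mem_filter.1 hp).2.pos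
  have step3 : Real.log M ≤ Real.log (Nat.factorial n) := by
    apply Real.log_le_log (by exact_mod_cast hM1)
    exact_mod_cast Nat.le_of_dvd (Nat.factorial_pos n) hMdvd
  -- Step 4
  have hnx : (n : ℝ) ≤ x := Nat.floor_le (by linarith)
  have hxn : x - 1 < (n : ℝ) := Nat.sub_one_lt_floor x
  have hn0 : (16:ℝ) ≤ (n : ℝ) := by exact_mod_cast hn16
  have hlogn : Real.log n ≤ Real.log x := Real.log_le_log (by linarith) hnx
  have hlogn0 : 0 ≤ Real.log n := Real.log_nonneg (by linarith)
  have step4 : Real.log (Nat.factorial n) ≤ x * Real.log x - x + 2 + Real.log x := by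
    have h1 := log_factorial_le n (by omega)
    have h2 : (n:ℝ) * Real.log n ≤ x * Real.log x :=
      mul_le_mul hnx hlogn hlogn0 (by linarith)
    linarith
  -- Step 5
  have step5 := numeric16 x hx
  -- Combine
  have hchain : x * A < x * Real.log x - x * Real.log 2 + T := by
    have hTlog : Real.log x ≤ Real.log x := le_refl _
    nlinarith [step1, step2, step3, step4, step5]
  -- Finish
  have hsum : (∑ p ∈ P, Real.log p * ((p : ℝ)⁻¹ - x⁻¹)) = A - T * x⁻¹ := by
    rw [hA, hT, Finset.sum_mul, ← Finset.sum_sub_distrib]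
    apply Finset.sum_congr rfl
    intro p _
    ring
  rw [hsum, sub_neg]
  rw [show A - T * x⁻¹ < Real.log x - Real.log 2 ↔
      x * (A - T * x⁻¹) < x * (Real.log x - Real.log 2) from
    (mul_lt_mul_iff_right₀ hx0).symm]
  have hxx : x * x⁻¹ = 1 := mul_inv_cancel₀ (ne_of_gt hx0)
  have e : x * (A - T * x⁻¹) = x * A - T := by
    rw [mul_sub, show x * (T * x⁻¹) = T * (x * x⁻¹) by ring, hxx, mul_one]
  rw [e, mul_sub]
  linarith

lemma log_le_aux (y : ℝ) (k : ℕ) (hy : 0 < y) :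
    Real.log y ≤ k * Real.log 2 + y / 2 ^ k - 1 := by
  have h := Real.log_le_sub_one_of_pos (x := y / 2 ^ k) (by positivity)
  rw [Real.log_div (ne_of_gt hy) (by positivity), Real.log_pow] at h
  linarith

lemma theta_lt_self (t : ℝ) (h2 : 2 < t) (h16 : t < 16) : theta t < t := by
  have h0 : (0:ℝ) ≤ t := by linarith
  have hm2 : 2 ≤ ⌊t⌋₊ := Nat.le_floor (by exact_mod_cast h2.le)
  have hm15 : ⌊t⌋₊ < 16 := (Nat.floor_lt h0).mpr (by exact_mod_cast h16)
  have hmt : (⌊t⌋₊ : ℝ) ≤ t := Nat.floor_le h0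
  have l2 : Real.log 2 < 0.6931471808 := Real.log_two_lt_d9
  have l2' : 0 < Real.log 2 := Real.log_pos (by norm_num)
  have l3 : Real.log 3 ≤ 2 * Real.log 2 - 0.25 := by
    have := log_le_aux 3 2 (by norm_num); norm_num at this ⊢; linarith
  have l5 : Real.log 5 ≤ 2 * Real.log 2 + 0.25 := by
    have := log_le_aux 5 2 (by norm_num); norm_num at this ⊢; linarith
  have l7 : Real.log 7 ≤ 3 * Real.log 2 - 0.125 := by
    have := log_le_aux 7 3 (by norm_num); norm_num at this ⊢; linarith
  have l11 : Real.log 11 ≤ 3 * Real.log 2 + 0.375 := by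
    have := log_le_aux 11 3 (by norm_num); norm_num at this ⊢; linarith
  have l13 : Real.log 13 ≤ 4 * Real.log 2 - 0.1875 := by
    have := log_le_aux 13 4 (by norm_num); norm_num at this ⊢; linarith
  have key : theta t < (⌊t⌋₊ : ℝ) := by
    unfold theta
    set m := ⌊t⌋₊ with hmm
    clear_value m
    clear hmt hmm
    interval_cases m <;>
      (simp only [Finset.sum_filter, Finset.sum_range_succ, Finset.sum_range_zero] <;>
       norm_num <;> linarith)
  linarith

lemma partA (x : ℝ) (h2 : 2 < x) (h16 : x ≤ 16) :
    (∫ t in (2:ℝ)..x, (theta t - t) / t ^ 2) < 0 := by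
  have hInt : IntervalIntegrable (fun t => (theta t - t) / t ^ 2) volume 2 x :=
    integrable_aux' 2 x (by norm_num) (by linarith)
  have hpos := intervalIntegral.intervalIntegral_pos_of_pos_on
    (f := fun t => -((theta t - t) / t ^ 2)) hInt.neg ?_ h2
  · rw [intervalIntegral.integral_neg] at hpos
    linarith
  · intro t ht
    have ht2 : 2 < t := ht.1
    have htx : t < x := ht.2
    have hth : theta t < t := theta_lt_self t ht2 (by linarith)
    have ht0 : (0:ℝ) < t ^ 2 := by positivity
    simp only [neg_pos]
    apply div_neg_of_neg_of_pos (by linarith) ht0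

theorem integral_theta_sub_id_div_sq_neg (x : ℝ) (hx : x > 2) :
    (∫ t in (2:ℝ)..x, (theta t - t) / t ^ 2) < 0 := by
  rcases le_or_gt x 16 with h | h
  · exact partA x hx h
  · rw [integral_identity x (by linarith)]
    exact partB x (by linarith)
end

section
/- Unconditionally, for every real x > 2, ∫_2^x (ψ(t) − t)/t² dt < 0. -/
open MeasureTheory Filter

/-- `psi x = ∑_{p^m ≤ x} log p`, the Chebyshev psi function. -/
noncomputable def psi (x : ℝ) : ℝ :=
  ∑ n ∈ Finset.Icc 1 ⌊x⌋₊, ArithmeticFunction.vonMangoldt n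

open Finset

section aux

local notation "Λ" => ArithmeticFunction.vonMangoldt


-- divisor sum swap
lemma swap_lemma (N : ℕ) :
    ∑ m ∈ Finset.Icc 1 N, Real.log m = ∑ n ∈ Finset.Icc 1 N, Λ n * (N / n : ℕ) := by
  have h1 : ∀ m ∈ Finset.Icc 1 N, Real.log m = ∑ d ∈ Finset.Icc 1 N, if d ∣ m then Λ d else 0 := by
    intro m hm
    simp only [Finset.mem_Icc] at hm
    rw [← Finset.sum_filter]
    have hfil : (Finset.Icc 1 N).filter (· ∣ m) = m.divisors := by
      ext d
      simp only [Finset.mem_filter, Finset.mem_Icc, Nat.mem_divisors]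
      constructor
      · rintro ⟨⟨h1, h2⟩, h3⟩
        exact ⟨h3, by omega⟩
      · rintro ⟨h3, h4⟩
        have hd0 : d ≠ 0 := by rintro rfl; exact h4 (Nat.eq_zero_of_zero_dvd h3)
        exact ⟨⟨by omega, le_trans (Nat.le_of_dvd (by omega) h3) hm.2⟩, h3⟩
    rw [hfil, ArithmeticFunction.vonMangoldt_sum]
  rw [Finset.sum_congr rfl h1, Finset.sum_comm]
  refine Finset.sum_congr rfl fun d hd => ?_
  rw [← Finset.sum_filter, Finset.sum_const, nsmul_eq_mul, mul_comm]
  congr 1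
  have : Finset.Icc 1 N = Finset.Ioc 0 N := rfl
  rw [this]
  rw [Nat.Ioc_filter_dvd_card_eq_div]

lemma log_step (N : ℕ) (hN : 1 ≤ N) :
    Real.log 2 ≤ N * (Real.log (N + 1) - Real.log N) := by
  have hN0 : (0:ℝ) < N := by exact_mod_cast hN
  have h2 : (2:ℝ) ≤ ((N + 1) / N : ℝ) ^ N := by
    have hm0 : (0:ℝ) ≤ 1 / N := by positivity
    have hm2 : (-2:ℝ) ≤ 1 / N := le_trans (by norm_num) hm0
    have := one_add_mul_le_pow hm2 N
    have hx : (1 : ℝ) + (N:ℝ) * (1 / N) = 2 := by field_simp; norm_num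
    rw [hx] at this
    calc (2:ℝ) ≤ (1 + 1/(N:ℝ)) ^ N := this
      _ = (((N:ℝ) + 1) / N) ^ N := by congr 1; field_simp
  have := Real.log_le_log (by norm_num) h2
  rwa [Real.log_pow, Real.log_div (by positivity) (by positivity)] at this

lemma sum_log_le (N : ℕ) (hN : 6 ≤ N) :
    ∑ m ∈ Finset.Icc 1 N, Real.log m ≤ N * (Real.log N - Real.log 2) := by
  induction N, hN using Nat.le_induction with
  | base =>
    have h1 : ∑ m ∈ Finset.Icc 1 6, Real.log (m:ℕ) = Real.log 720 := by
      rw [← Real.log_prod (fun m hm => by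
        simp only [Finset.mem_Icc] at hm
        exact_mod_cast Nat.cast_ne_zero.mpr (by omega : m ≠ 0) )]
      rw [← Nat.cast_prod]
      norm_num [show ∏ i ∈ Finset.Icc 1 6, i = 720 from rfl]
    rw [h1]
    have h2 : ((6:ℕ):ℝ) * (Real.log ((6:ℕ):ℝ) - Real.log 2) = Real.log 729 := by
      push_cast
      have h3 : Real.log 6 - Real.log 2 = Real.log 3 := by
        rw [← Real.log_div (by norm_num) (by norm_num)]; norm_num
      rw [h3, show (729:ℝ) = 3 ^ 6 by norm_num, Real.log_pow]
      push_cast; ring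
    rw [h2]
    exact Real.log_le_log (by norm_num) (by norm_num)
  | succ N hN ih =>
    rw [Finset.sum_Icc_succ_top (by omega)]
    have hstep := log_step N (by omega)
    push_cast at ih ⊢
    nlinarith [ih]


noncomputable def hh (n : ℕ) : ℝ → ℝ := Set.indicator (Set.Ici (n:ℝ)) (fun t => Λ n / t^2)

lemma base_ii (c a b : ℝ) (ha : 0 < a) (hab : a ≤ b) :
    IntervalIntegrable (fun t => c / t^2) volume a b := by
  apply ContinuousOn.intervalIntegrable
  apply ContinuousOn.div continuousOn_const (by fun_prop)
  intro t ht
  rw [Set.uIcc_of_le hab] at ht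
  have : 0 < t := lt_of_lt_of_le ha ht.1
  positivity

lemma base_int (c a b : ℝ) (ha : 0 < a) (hab : a ≤ b) :
    ∫ t in a..b, c / t^2 = c * (1/a - 1/b) := by
  have h0 : (0:ℝ) ∉ Set.uIcc a b := by
    rw [Set.uIcc_of_le hab]
    intro h
    exact absurd h.1 (by linarith)
  have h1 : ∀ t : ℝ, c / t^2 = c * t ^ (-2 : ℤ) := by
    intro t
    rw [zpow_neg, ← zpow_natCast]
    norm_num
    ring
  simp_rw [h1]
  rw [intervalIntegral.integral_const_mul, integral_zpow (Or.inr ⟨by norm_num, h0⟩)]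
  have ha' : a ≠ 0 := ne_of_gt ha
  have hb' : b ≠ 0 := ne_of_gt (ha.trans_le hab)
  norm_num [zpow_neg]
  field_simp
  ring_nf
  tauto

lemma hh_ii (n : ℕ) (a b : ℝ) (ha : 0 < a) (hab : a ≤ b) :
    IntervalIntegrable (hh n) volume a b := by
  rw [intervalIntegrable_iff_integrableOn_Icc_of_le hab]
  unfold hh
  rw [IntegrableOn, integrable_indicator_iff measurableSet_Ici]
  exact ((intervalIntegrable_iff_integrableOn_Icc_of_le hab).mp
    (base_ii (Λ n) a b ha hab)).integrableOn

lemma hh_int (n : ℕ) (hn : 2 ≤ n) (x : ℝ) (hnx : (n:ℝ) ≤ x) :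
    ∫ t in (2:ℝ)..x, hh n t = Λ n * (1/n - 1/x) := by
  have hn2 : (2:ℝ) ≤ (n:ℝ) := by exact_mod_cast hn
  have hn0 : (0:ℝ) < (n:ℝ) := by linarith
  rw [← intervalIntegral.integral_add_adjacent_intervals (b := (n:ℝ))
    (hh_ii n 2 n (by norm_num) hn2) (hh_ii n n x hn0 hnx)]
  have h1 : ∫ t in (2:ℝ)..(n:ℝ), hh n t = 0 := by
    rw [intervalIntegral.integral_congr_ae (g := fun _ => 0), intervalIntegral.integral_const,
      smul_zero]
    have hne : ∀ᵐ t : ℝ ∂volume, t ≠ (n:ℝ) := by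
      rw [MeasureTheory.ae_iff]
      have : {t : ℝ | ¬ t ≠ (n:ℝ)} = {(n:ℝ)} := by ext t; simp
      rw [this]
      exact Real.volume_singleton
    filter_upwards [hne] with t htne ht
    rw [Set.uIoc_of_le hn2] at ht
    have : t < (n:ℝ) := lt_of_le_of_ne ht.2 htne
    unfold hh
    exact Set.indicator_of_notMem (by simpa using this.not_ge) _
  have h2 : ∫ t in (n:ℝ)..x, hh n t = Λ n * (1/n - 1/x) := by
    rw [intervalIntegral.integral_congr (g := fun t => Λ n / t^2), base_int _ _ _ hn0 hnx]
    intro t ht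
    rw [Set.uIcc_of_le hnx] at ht
    exact Set.indicator_of_mem (by simpa using ht.1) _
  rw [h1, h2, zero_add]

lemma key_identity (x : ℝ) (hx : 2 < x) :
    (∫ t in (2:ℝ)..x, (psi t - t) / t ^ 2)
      = (∑ n ∈ Finset.Icc 1 ⌊x⌋₊, Λ n * (1/n - 1/x)) - Real.log (x/2) := by
  have hx0 : (0:ℝ) < x := by linarith
  have hNx : ((⌊x⌋₊:ℕ):ℝ) ≤ x := Nat.floor_le hx0.le
  have hEq : Set.EqOn (fun t => (psi t - t) / t ^ 2)
      (fun t => (∑ n ∈ Finset.Icc 1 ⌊x⌋₊, hh n t) - 1/t) (Set.uIcc 2 x) := by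
    intro t ht
    rw [Set.uIcc_of_le hx.le] at ht
    obtain ⟨ht2, htx⟩ := ht
    have ht0 : (0:ℝ) < t := by linarith
    have hsum : ∑ n ∈ Finset.Icc 1 ⌊x⌋₊, hh n t = psi t / t^2 := by
      have h1 : ∀ n ∈ Finset.Icc 1 ⌊x⌋₊, hh n t = if (n:ℝ) ≤ t then Λ n / t^2 else 0 := by
        intro n _
        unfold hh
        rw [Set.indicator_apply]
        simp [Set.mem_Ici]
      rw [Finset.sum_congr rfl h1, ← Finset.sum_filter]
      have h2 : (Finset.Icc 1 ⌊x⌋₊).filter (fun n : ℕ => (n:ℝ) ≤ t) = Finset.Icc 1 ⌊t⌋₊ := by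
        ext n
        simp only [Finset.mem_filter, Finset.mem_Icc]
        constructor
        · rintro ⟨⟨h1', _⟩, h3⟩
          exact ⟨h1', Nat.le_floor h3⟩
        · rintro ⟨h1', h2'⟩
          have hnt : (n:ℝ) ≤ t := (Nat.le_floor_iff ht0.le).mp h2'
          exact ⟨⟨h1', Nat.le_floor (hnt.trans htx)⟩, hnt⟩
      rw [h2, psi, ← Finset.sum_div]
    simp only
    rw [hsum, sub_div]
    congr 1
    rw [pow_two]
    field_simp
  rw [intervalIntegral.integral_congr hEq]
  have hii : ∀ n ∈ Finset.Icc 1 ⌊x⌋₊, IntervalIntegrable (hh n) volume 2 x :=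
    fun n _ => hh_ii n 2 x (by norm_num) hx.le
  have h1t : IntervalIntegrable (fun t : ℝ => 1/t) volume 2 x := by
    apply ContinuousOn.intervalIntegrable
    apply ContinuousOn.div continuousOn_const continuousOn_id
    intro t ht
    rw [Set.uIcc_of_le hx.le] at ht
    have h0t : (0:ℝ) < t := by linarith [ht.1]
    simpa using h0t.ne'
  have hsum_ii : IntervalIntegrable (fun t => ∑ n ∈ Finset.Icc 1 ⌊x⌋₊, hh n t) volume 2 x := by
    have h' : (∑ i ∈ Finset.Icc 1 ⌊x⌋₊, hh i) = fun t => ∑ n ∈ Finset.Icc 1 ⌊x⌋₊, hh n t := by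
      ext t; simp [Finset.sum_apply]
    exact h' ▸ IntervalIntegrable.sum _ hii
  rw [intervalIntegral.integral_sub hsum_ii h1t,
    intervalIntegral.integral_finset_sum hii,
    integral_one_div (by rw [Set.uIcc_of_le hx.le]; intro h; linarith [h.1])]
  congr 1
  refine Finset.sum_congr rfl fun n hn => ?_
  simp only [Finset.mem_Icc] at hn
  rcases eq_or_lt_of_le hn.1 with h1 | h1
  · subst h1
    have : hh 1 = fun _ => 0 := by
      unfold hh
      simp [ArithmeticFunction.vonMangoldt_apply_one]
    rw [this]
    simp [ArithmeticFunction.vonMangoldt_apply_one]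
  · exact hh_int n h1 x (le_trans (by exact_mod_cast Nat.cast_le.mpr hn.2) hNx)


lemma lam2 : Λ 2 = Real.log 2 := ArithmeticFunction.vonMangoldt_apply_prime (by norm_num)
lemma lam3 : Λ 3 = Real.log 3 := ArithmeticFunction.vonMangoldt_apply_prime (by norm_num)
lemma lam4 : Λ 4 = Real.log 2 := by
  rw [show (4:ℕ) = 2^2 by norm_num, ArithmeticFunction.vonMangoldt_apply_pow (by norm_num), lam2]
lemma lam5 : Λ 5 = Real.log 5 := ArithmeticFunction.vonMangoldt_apply_prime (by norm_num)

lemma sum_icc_2 (f : ℕ → ℝ) : ∑ n ∈ Finset.Icc 1 2, f n = f 1 + f 2 := by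
  rw [show Finset.Icc 1 2 = {1, 2} from rfl]
  simp [Finset.sum_insert, Finset.mem_insert]
lemma sum_icc_3 (f : ℕ → ℝ) : ∑ n ∈ Finset.Icc 1 3, f n = f 1 + f 2 + f 3 := by
  rw [show Finset.Icc 1 3 = {1, 2, 3} from rfl]
  simp [Finset.sum_insert, Finset.mem_insert]
  ring
lemma sum_icc_4 (f : ℕ → ℝ) : ∑ n ∈ Finset.Icc 1 4, f n = f 1 + f 2 + f 3 + f 4 := by
  rw [show Finset.Icc 1 4 = {1, 2, 3, 4} from rfl]
  simp [Finset.sum_insert, Finset.mem_insert]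
  ring
lemma sum_icc_5 (f : ℕ → ℝ) : ∑ n ∈ Finset.Icc 1 5, f n = f 1 + f 2 + f 3 + f 4 + f 5 := by
  rw [show Finset.Icc 1 5 = {1, 2, 3, 4, 5} from rfl]
  simp [Finset.sum_insert, Finset.mem_insert]
  ring

lemma est (c P N x : ℝ) (hN : 0 < N) (hNx : N ≤ x) :
    c - P/x - Real.log (x/2) ≤ (c - P/N - Real.log (N/2)) + ((x-N)/(N*x))*(P-N) := by
  have hx0 : (0:ℝ) < x := lt_of_lt_of_le hN hNx
  have hlog : Real.log (N/x) ≤ N/x - 1 := Real.log_le_sub_one_of_pos (by positivity)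
  have e3 : Real.log (x/2) - Real.log (N/2) = - Real.log (N/x) := by
    rw [Real.log_div hx0.ne' (by norm_num), Real.log_div hN.ne' (by norm_num),
      Real.log_div hN.ne' hx0.ne']
    ring
  have e1 : P/N - P/x = P*(x-N)/(N*x) := by field_simp
  have e2 : ((x-N)/(N*x))*(P-N) = P*(x-N)/(N*x) - (x-N)/x := by field_simp
  have e4 : (x-N)/x = 1 - N/x := by field_simp
  linarith

lemma pow_log_lt (a b : ℝ) (p q : ℕ) (ha : 0 < a) (h : a ^ p < b ^ q) :
    p * Real.log a < q * Real.log b := by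
  have := Real.log_lt_log (by positivity) h
  rwa [Real.log_pow, Real.log_pow] at this

lemma pow_log_le (a b : ℝ) (p q : ℕ) (ha : 0 < a) (h : a ^ p ≤ b ^ q) :
    p * Real.log a ≤ q * Real.log b := by
  have := Real.log_le_log (by positivity) h
  rwa [Real.log_pow, Real.log_pow] at this

lemma small_case (x : ℝ) (hx : 2 < x) (h5 : ⌊x⌋₊ ≤ 5) :
    ∑ n ∈ Finset.Icc 1 ⌊x⌋₊, Λ n * (1/n - 1/x) < Real.log (x/2) := by
  have hx0 : (0:ℝ) < x := by linarith
  have hNx : (⌊x⌋₊:ℝ) ≤ x := Nat.floor_le hx0.le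
  have hN2 : 2 ≤ ⌊x⌋₊ := Nat.le_floor (by exact_mod_cast hx.le)
  have hsplit : ∑ n ∈ Finset.Icc 1 ⌊x⌋₊, Λ n * (1/n - 1/x)
      = (∑ n ∈ Finset.Icc 1 ⌊x⌋₊, Λ n / n) - (∑ n ∈ Finset.Icc 1 ⌊x⌋₊, Λ n)/x := by
    simp only [mul_sub, Finset.sum_sub_distrib, mul_one_div, ← Finset.sum_div]
  rw [hsplit]
  have l2 : Real.log 2 < 0.6931471808 := Real.log_two_lt_d9
  have l2' : (0:ℝ) < Real.log 2 := Real.log_pos (by norm_num)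
  have l3' : (0:ℝ) < Real.log 3 := Real.log_pos (by norm_num)
  have l5' : (0:ℝ) < Real.log 5 := Real.log_pos (by norm_num)
  have l32 : Real.log 3 ≤ 2 * Real.log 2 := by
    simpa using pow_log_le 3 2 1 2 (by norm_num) (by norm_num)
  have l52 : Real.log 5 ≤ 3 * Real.log 2 := by
    simpa using pow_log_le 5 2 1 3 (by norm_num) (by norm_num)
  set N := ⌊x⌋₊ with hNdef
  interval_cases N
  all_goals push_cast at hNx
  · -- N = 2
    rw [sum_icc_2, sum_icc_2]
    simp only [ArithmeticFunction.vonMangoldt_apply_one, lam2]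
    have hkey := est (Real.log 2 / 2) (Real.log 2) 2 x (by norm_num) hNx
    have hterm : ((x-2)/(2*x))*(Real.log 2 - 2) < 0 := by
      apply mul_neg_of_pos_of_neg
      · apply div_pos <;> linarith
      · linarith
    have h22 : Real.log ((2:ℝ)/2) = 0 := by norm_num
    rw [h22] at hkey
    push_cast
    ring_nf at hkey hterm ⊢
    linarith
  · -- N = 3
    rw [sum_icc_3, sum_icc_3]
    simp only [ArithmeticFunction.vonMangoldt_apply_one, lam2, lam3]
    have hkey := est (Real.log 2 / 2 + Real.log 3 / 3) (Real.log 2 + Real.log 3) 3 x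
      (by norm_num) hNx
    have hterm : ((x-3)/(3*x))*((Real.log 2 + Real.log 3) - 3) ≤ 0 := by
      apply mul_nonpos_of_nonneg_of_nonpos
      · apply div_nonneg <;> linarith
      · linarith
    have h76 : (7:ℝ) * Real.log 2 < 6 * Real.log 3 := by
      simpa using pow_log_lt 2 3 7 6 (by norm_num) (by norm_num)
    have h32 : Real.log ((3:ℝ)/2) = Real.log 3 - Real.log 2 :=
      Real.log_div (by norm_num) (by norm_num)
    rw [h32] at hkey
    push_cast
    ring_nf at hkey hterm ⊢
    linarith
  · -- N = 4
    rw [sum_icc_4, sum_icc_4]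
    simp only [ArithmeticFunction.vonMangoldt_apply_one, lam2, lam3, lam4]
    have hkey := est (Real.log 2 / 2 + Real.log 3 / 3 + Real.log 2 / 4)
      (Real.log 2 + Real.log 3 + Real.log 2) 4 x (by norm_num) hNx
    have hterm : ((x-4)/(4*x))*((Real.log 2 + Real.log 3 + Real.log 2) - 4) ≤ 0 := by
      apply mul_nonpos_of_nonneg_of_nonpos
      · apply div_nonneg <;> linarith
      · linarith
    have h19 : Real.log 3 < 9 * Real.log 2 := by
      simpa using pow_log_lt 3 2 1 9 (by norm_num) (by norm_num)
    have h42 : Real.log ((4:ℝ)/2) = Real.log 2 := by norm_num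
    rw [h42] at hkey
    push_cast
    ring_nf at hkey hterm ⊢
    linarith
  · -- N = 5
    rw [sum_icc_5, sum_icc_5]
    simp only [ArithmeticFunction.vonMangoldt_apply_one, lam2, lam3, lam4, lam5]
    have hkey := est (Real.log 2 / 2 + Real.log 3 / 3 + Real.log 2 / 4 + Real.log 5 / 5)
      (Real.log 2 + Real.log 3 + Real.log 2 + Real.log 5) 5 x (by norm_num) hNx
    have hterm : ((x-5)/(5*x))*((Real.log 2 + Real.log 3 + Real.log 2 + Real.log 5) - 5) ≤ 0 := by
      apply mul_nonpos_of_nonneg_of_nonpos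
      · apply div_nonneg <;> linarith
      · linarith
    have h81 : (81:ℝ) * Real.log 2 + 8 * Real.log 3 < 60 * Real.log 5 := by
      have h1 : Real.log ((2:ℝ)^81 * 3^8) < Real.log ((5:ℝ)^60) := by
        apply Real.log_lt_log (by positivity)
        norm_num
      rw [Real.log_mul (by positivity) (by positivity), Real.log_pow, Real.log_pow,
        Real.log_pow] at h1
      push_cast at h1
      linarith
    have h52 : Real.log ((5:ℝ)/2) = Real.log 5 - Real.log 2 :=
      Real.log_div (by norm_num) (by norm_num)
    rw [h52] at hkey
    push_cast
    ring_nf at hkey hterm ⊢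
    linarith

lemma large_case (x : ℝ) (hx : 2 < x) (h6 : 6 ≤ ⌊x⌋₊) :
    ∑ n ∈ Finset.Icc 1 ⌊x⌋₊, Λ n * (1/n - 1/x) < Real.log (x/2) := by
  set N := ⌊x⌋₊ with hNdef
  have hx0 : (0:ℝ) < x := by linarith
  have hNx : (N:ℝ) ≤ x := Nat.floor_le hx0.le
  have hN6 : (6:ℝ) ≤ (N:ℝ) := by exact_mod_cast h6
  have hP0 : (0:ℝ) ≤ ∑ n ∈ Finset.Icc 1 N, Λ n :=
    Finset.sum_nonneg fun _ _ => ArithmeticFunction.vonMangoldt_nonneg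
  rw [← mul_lt_mul_iff_right₀ hx0]
  have hmul : x * ∑ n ∈ Finset.Icc 1 N, Λ n * (1/n - 1/x)
      = (∑ n ∈ Finset.Icc 1 N, Λ n * (x/n)) - ∑ n ∈ Finset.Icc 1 N, Λ n := by
    rw [Finset.mul_sum, ← Finset.sum_sub_distrib]
    refine Finset.sum_congr rfl fun n hn => ?_
    simp only [Finset.mem_Icc] at hn
    have hn0 : (0:ℝ) < n := by exact_mod_cast hn.1
    field_simp
  have hlt : (∑ n ∈ Finset.Icc 1 N, Λ n * (x/n))
      < ∑ n ∈ Finset.Icc 1 N, Λ n * (((N/n : ℕ):ℝ) + 1) := by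
    apply Finset.sum_lt_sum
    · intro n hn
      have hfl : x/n < ((N/n : ℕ):ℝ) + 1 := by
        rw [hNdef, ← Nat.floor_div_natCast x n]
        exact Nat.lt_floor_add_one _
      exact mul_le_mul_of_nonneg_left hfl.le ArithmeticFunction.vonMangoldt_nonneg
    · refine ⟨2, Finset.mem_Icc.mpr ⟨by norm_num, by omega⟩, ?_⟩
      have hfl : x/2 < ((N/2 : ℕ):ℝ) + 1 := by
        rw [hNdef, ← Nat.floor_div_natCast x 2]
        exact Nat.lt_floor_add_one _
      have hl2 : (0:ℝ) < Λ 2 := by rw [lam2]; exact Real.log_pos (by norm_num)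
      exact mul_lt_mul_of_pos_left hfl hl2
  have hsum2 : ∑ n ∈ Finset.Icc 1 N, Λ n * (((N/n : ℕ):ℝ) + 1)
      = (∑ m ∈ Finset.Icc 1 N, Real.log m) + ∑ n ∈ Finset.Icc 1 N, Λ n := by
    simp only [mul_add, mul_one, Finset.sum_add_distrib]
    rw [swap_lemma N]
  have hT : ∑ m ∈ Finset.Icc 1 N, Real.log m ≤ x * Real.log (x/2) := by
    have h1 := sum_log_le N h6
    have h2 : (N:ℝ) * (Real.log N - Real.log 2) = N * Real.log ((N:ℝ)/2) := by
      rw [Real.log_div (by linarith) (by norm_num)]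
    have h3 : (N:ℝ) * Real.log ((N:ℝ)/2) ≤ x * Real.log ((N:ℝ)/2) := by
      apply mul_le_mul_of_nonneg_right hNx
      apply Real.log_nonneg
      linarith
    have h4 : Real.log ((N:ℝ)/2) ≤ Real.log (x/2) := by
      apply Real.log_le_log (by linarith)
      linarith
    nlinarith [h4, hx0]
  rw [hmul]
  linarith [hlt, hsum2, hT]

end aux

theorem integral_psi_sub_id_div_sq_neg (x : ℝ) (hx : x > 2) :
    (∫ t in (2:ℝ)..x, (psi t - t) / t ^ 2) < 0 := by
  rw [key_identity x hx, sub_neg]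
  rcases le_or_gt 6 ⌊x⌋₊ with h | h
  · exact large_case x hx h
  · exact small_case x hx (by omega)
end

section
/- For all real x > 1, li(x) < x/log x + 2x/log²x. -/
open MeasureTheory Filter

/-- `li x` is the logarithmic integral, defined for `x > 1` as the Cauchy principal value
`lim_{ε→0⁺} (∫_0^{1-ε} du/log u + ∫_{1+ε}^x du/log u)`. -/
noncomputable def li (x : ℝ) : ℝ :=
  limUnder (nhdsWithin (0:ℝ) (Set.Ioi 0)) (fun ε =>
    (∫ u in (0:ℝ)..(1 - ε), 1 / Real.log u) + ∫ u in (1 + ε)..x, 1 / Real.log u)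

/-- Helper: if `f 1 = 0` and `f' ≥ 0` on `[1,∞)`, then `f u ≥ 0` for `u ≥ 1`. -/
lemma aux_nonneg_of_deriv {f f' : ℝ → ℝ}
    (hd : ∀ t ∈ Set.Ici (1:ℝ), HasDerivAt f (f' t) t)
    (h0 : ∀ t ∈ Set.Ioi (1:ℝ), 0 ≤ f' t) {u : ℝ} (hu : 1 ≤ u) : f 1 ≤ f u := by
  have hmono : MonotoneOn f (Set.Ici 1) := by
    apply monotoneOn_of_deriv_nonneg (convex_Ici 1)
    · exact fun t ht => (hd t ht).continuousAt.continuousWithinAt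
    · intro t ht
      rw [interior_Ici] at ht
      exact (hd t (Set.mem_Ici.2 (le_of_lt (Set.mem_Ioi.1 ht)))).differentiableAt.differentiableWithinAt
    · intro t ht
      rw [interior_Ici] at ht
      rw [(hd t (Set.mem_Ici.2 (le_of_lt (Set.mem_Ioi.1 ht)))).deriv]
      exact h0 t ht
  exact hmono (Set.mem_Ici.2 le_rfl) (Set.mem_Ici.2 hu) hu

/-- `log u ≥ 2(u-1)/(u+1)` for `u ≥ 1`. -/
lemma pade2 {u : ℝ} (hu : 1 ≤ u) : 2*(u-1)/(u+1) ≤ Real.log u := by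
  have := aux_nonneg_of_deriv (f := fun t => Real.log t - 2*(t-1)/(t+1))
    (f' := fun t => (t-1)^2/(t*(t+1)^2)) ?_ ?_ hu
  · simp only [Real.log_one] at this; linarith
  · intro t ht
    simp only [Set.mem_Ici] at ht
    have hl := Real.hasDerivAt_log (by linarith : t ≠ 0)
    have hd2 : HasDerivAt (fun t : ℝ => 2*(t-1)/(t+1))
        ((2*(t+1) - 2*(t-1)*1)/(t+1)^2) t := by
      apply HasDerivAt.div
      · simpa using ((hasDerivAt_id t).sub_const 1).const_mul 2
      · simpa using (hasDerivAt_id t).add_const 1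
      · intro h; linarith
    have := hl.sub hd2
    refine this.congr_deriv ?_
    have ht0 : (0:ℝ) < t := by linarith
    field_simp
    ring
  · intro t ht
    simp only [Set.mem_Ioi] at ht
    positivity

/-- `log u ≥ 3(u²-1)/(u²+4u+1)` for `u ≥ 1`. -/
lemma pade3 {u : ℝ} (hu : 1 ≤ u) : 3*(u^2-1)/(u^2+4*u+1) ≤ Real.log u := by
  have := aux_nonneg_of_deriv (f := fun t => Real.log t - 3*(t^2-1)/(t^2+4*t+1))
    (f' := fun t => (t-1)^4/(t*(t^2+4*t+1)^2)) ?_ ?_ hu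
  · simp only [Real.log_one] at this; linarith
  · intro t ht
    simp only [Set.mem_Ici] at ht
    have ht0 : (0:ℝ) < t := by linarith
    have hq : (0:ℝ) < t^2+4*t+1 := by nlinarith
    have hl := Real.hasDerivAt_log (ne_of_gt ht0)
    have hnum : HasDerivAt (fun t : ℝ => 3*(t^2-1)) (3*(2*t)) t := by
      simpa using ((hasDerivAt_pow 2 t).sub_const 1).const_mul 3
    have hden : HasDerivAt (fun t : ℝ => t^2+4*t+1) (2*t + 4) t := by
      have h := (hasDerivAt_pow 2 t).add (((hasDerivAt_id t).const_mul 4).add_const 1)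
      exact (h.congr_deriv (by norm_num : (↑(2:ℕ) * t ^ (2 - 1) + 4 * 1 : ℝ) = 2 * t + 4)).congr_of_eventuallyEq
        (Filter.Eventually.of_forall fun x => by simp only [Pi.add_apply, id]; ring)
    have hd2 : HasDerivAt (fun t : ℝ => 3*(t^2-1)/(t^2+4*t+1))
        ((3*(2*t)*(t^2+4*t+1) - 3*(t^2-1)*(2*t+4))/(t^2+4*t+1)^2) t :=
      hnum.div hden (ne_of_gt hq)
    have := hl.sub hd2
    refine this.congr_deriv ?_
    field_simp
    ring
  · intro t ht
    simp only [Set.mem_Ioi] at ht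
    positivity

/-- `log u ≤ (u - u⁻¹)/2` for `u ≥ 1`. -/
lemma halfexp {u : ℝ} (hu : 1 ≤ u) : Real.log u ≤ (u - u⁻¹)/2 := by
  have := aux_nonneg_of_deriv (f := fun t => (t - t⁻¹)/2 - Real.log t)
    (f' := fun t => (t-1)^2/(2*t^2)) ?_ ?_ hu
  · simp only [Real.log_one] at this
    norm_num at this
    linarith
  · intro t ht
    simp only [Set.mem_Ici] at ht
    have ht0 : (0:ℝ) < t := by linarith
    have hl := Real.hasDerivAt_log (ne_of_gt ht0)
    have hinv : HasDerivAt (fun t : ℝ => t⁻¹) (-(t^2)⁻¹) t := by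
      simpa using hasDerivAt_inv (ne_of_gt ht0)
    have hd2 : HasDerivAt (fun t : ℝ => (t - t⁻¹)/2) ((1 - -(t^2)⁻¹)/2) t := by
      exact ((hasDerivAt_id t).sub hinv).div_const 2
    have := hd2.sub hl
    refine this.congr_deriv ?_
    field_simp
    ring
  · intro t ht
    simp only [Set.mem_Ioi] at ht
    positivity

/-- `log u ≤ 2(u-1)/(u+1)` for `0 < u ≤ 1`. -/
lemma pade2' {u : ℝ} (h0 : 0 < u) (hu : u ≤ 1) : Real.log u ≤ 2*(u-1)/(u+1) := by
  have hv : 1 ≤ u⁻¹ := (one_le_inv_iff₀).2 ⟨h0, hu⟩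
  have := pade2 hv
  rw [Real.log_inv] at this
  have heq : 2*(u⁻¹-1)/(u⁻¹+1) = -(2*(u-1)/(u+1)) := by
    have hu1 : u + 1 > 0 := by linarith
    have hvu : u⁻¹ + 1 > 0 := by positivity
    field_simp
    ring
  rw [heq] at this
  linarith

/-- `(u - u⁻¹)/2 ≤ log u` for `0 < u ≤ 1`. -/
lemma halfexp' {u : ℝ} (h0 : 0 < u) (hu : u ≤ 1) : (u - u⁻¹)/2 ≤ Real.log u := by
  have hv : 1 ≤ u⁻¹ := (one_le_inv_iff₀).2 ⟨h0, hu⟩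
  have := halfexp hv
  rw [Real.log_inv] at this
  have heq : (u⁻¹ - (u⁻¹)⁻¹)/2 = -((u - u⁻¹)/2) := by
    rw [inv_inv]; ring
  rw [heq] at this
  linarith

/-- The regularized integrand. -/
noncomputable def gli (u : ℝ) : ℝ := 1/Real.log u - 1/(u-1)

lemma gli_add (u : ℝ) : 1/Real.log u = gli u + 1/(u-1) := by
  unfold gli; ring

/-- `0 ≤ gli u` for `0 ≤ u`. -/
lemma gli_nonneg {u : ℝ} (hu : 0 ≤ u) : 0 ≤ gli u := by
  unfold gli
  rcases eq_or_lt_of_le hu with h | h0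
  · simp [← h]
  rcases lt_trichotomy u 1 with h1 | h1 | h1
  · -- 0 < u < 1 : log u < u - 1 < 0
    have hlog : Real.log u < u - 1 := Real.log_lt_sub_one_of_pos h0 (ne_of_lt h1)
    have hl0 : Real.log u < 0 := Real.log_neg h0 h1
    have : 1/(u-1) ≤ 1/Real.log u := by
      apply one_div_le_one_div_of_neg_of_le _ (le_of_lt hlog)
      linarith
    linarith
  · simp [h1]
  · have hlog : Real.log u < u - 1 := Real.log_lt_sub_one_of_pos h0 (by linarith)
    have hl0 : 0 < Real.log u := Real.log_pos h1
    have : 1/(u-1) ≤ 1/Real.log u := by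
      apply one_div_le_one_div_of_le hl0 (le_of_lt hlog)
    linarith

/-- `gli u ≤ 1/2` for `u > 1`. -/
lemma gli_le_half {u : ℝ} (hu : 1 < u) : gli u ≤ 1/2 := by
  unfold gli
  have h2 := pade2 (le_of_lt hu)
  have hp : 0 < 2*(u-1)/(u+1) := by
    apply div_pos <;> linarith
  have h3 : 1/Real.log u ≤ 1/(2*(u-1)/(u+1)) := one_div_le_one_div_of_le hp h2
  have hne1 : u - 1 ≠ 0 := by linarith
  have hne2 : u + 1 ≠ 0 := by linarith
  have heq : 1/(2*(u-1)/(u+1)) - 1/(u-1) = 1/2 := by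
    rw [one_div_div]
    field_simp
    ring
  linarith

/-- `gli u ≤ 1/(u+1)` for `0 < u < 1`. -/
lemma gli_le_inv {u : ℝ} (h0 : 0 < u) (h1 : u < 1) : gli u ≤ 1/(u+1) := by
  unfold gli
  have h2 := halfexp' h0 (le_of_lt h1)
  have hneg : (u - u⁻¹)/2 < 0 := by
    have : 1 < u⁻¹ := (one_lt_inv_iff₀).2 ⟨h0, h1⟩
    linarith
  have hlneg : Real.log u < 0 := Real.log_neg h0 h1
  have hthis : 1/Real.log u ≤ 1/((u - u⁻¹)/2) :=
    one_div_le_one_div_of_neg_of_le hlneg h2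
  have hne0 : u ≠ 0 := ne_of_gt h0
  have hne1 : u - 1 ≠ 0 := by linarith
  have hne2 : u + 1 ≠ 0 := by linarith
  have hne3 : u^2 - 1 ≠ 0 := by nlinarith
  have heq : 1/((u - u⁻¹)/2) = 2*u/(u^2-1) := by
    rw [div_eq_div_iff (by linarith : (u - u⁻¹)/2 ≠ 0) hne3]
    field_simp
  have heq2 : 2*u/(u^2-1) - 1/(u-1) = 1/(u+1) := by
    field_simp
    ring
  linarith [heq ▸ hthis]

/-- `gli u ≤ 1` for `0 ≤ u`. -/
lemma gli_le_one {u : ℝ} (hu : 0 ≤ u) : gli u ≤ 1 := by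
  rcases eq_or_lt_of_le hu with h | h0
  · unfold gli; simp [← h]
  rcases lt_trichotomy u 1 with h1 | h1 | h1
  · have := gli_le_inv h0 h1
    have : 1/(u+1) ≤ 1 := by
      rw [div_le_one (by linarith)]; linarith
    linarith [gli_le_inv h0 h1]
  · unfold gli; simp [h1]
  · linarith [gli_le_half h1]

lemma gli_measurable : Measurable gli := by
  unfold gli
  apply Measurable.sub
  · simp only [one_div]
    exact Real.measurable_log.inv
  · simp only [one_div]
    exact ((measurable_id.sub_const 1)).inv

/-- gli is interval integrable on intervals within `[0,∞)`. -/
lemma gli_intervalIntegrable {a b : ℝ} (ha : 0 ≤ a) (hb : 0 ≤ b) :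
    IntervalIntegrable gli volume a b := by
  rw [intervalIntegrable_iff]
  apply MeasureTheory.Measure.integrableOn_of_bounded
    (M := 1) (s_finite := by rw [Set.uIoc]; exact ne_of_lt measure_Ioc_lt_top)
  · exact gli_measurable.aestronglyMeasurable
  · apply MeasureTheory.ae_restrict_of_forall_mem measurableSet_uIoc
    intro u hu
    have hu0 : 0 ≤ u := by
      rcases hu with ⟨h1, _⟩
      have : (0:ℝ) ≤ min a b := le_min ha hb
      linarith
    rw [Real.norm_eq_abs, abs_le]
    constructor
    · linarith [gli_nonneg hu0]
    · exact gli_le_one hu0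

/-- `1/(u-1)` is interval integrable when the interval avoids `1` from above. -/
lemma invsub_integrable_gt {a b : ℝ} (ha : 1 < a) (hb : 1 < b) :
    IntervalIntegrable (fun u : ℝ => 1/(u-1)) volume a b := by
  apply ContinuousOn.intervalIntegrable
  apply ContinuousOn.div continuousOn_const (by fun_prop)
  intro u hu
  rw [Set.mem_uIcc] at hu
  rcases hu with h | h
  · have := h.1; intro hc; nlinarith [min_le_left a b]
  · have := h.1; intro hc; nlinarith
/-- `1/(u-1)` is interval integrable when the interval is within `[0,1)`. -/
lemma invsub_integrable_lt {a b : ℝ} (ha : a < 1) (hb : b < 1) :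
    IntervalIntegrable (fun u : ℝ => 1/(u-1)) volume a b := by
  apply ContinuousOn.intervalIntegrable
  apply ContinuousOn.div continuousOn_const (by fun_prop)
  intro u hu
  rw [Set.mem_uIcc] at hu
  intro hc
  have h1 : u = 1 := by linarith
  rcases hu with h | h <;> rcases h with ⟨_, h2⟩ <;> rw [h1] at h2 <;> linarith

/-- FTC: `∫_a^b du/(u-1) = log(b-1) - log(a-1)` for `a, b > 1`. -/
lemma int_invsub_gt {a b : ℝ} (ha : 1 < a) (hb : 1 < b) :
    ∫ u in a..b, 1/(u-1) = Real.log (b-1) - Real.log (a-1) := by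
  apply intervalIntegral.integral_eq_sub_of_hasDerivAt
    (f := fun u => Real.log (u-1))
  · intro u hu
    rw [Set.uIcc_eq_union] at hu
    have hu1 : 1 < u := by
      rcases hu with h | h <;> rcases h with ⟨h1, _⟩ <;> linarith
    have h := (Real.hasDerivAt_log (by linarith : u - 1 ≠ 0)).comp u
      ((hasDerivAt_id u).sub_const 1)
    simpa [one_div, Function.comp_def] using h
  · exact invsub_integrable_gt ha hb

/-- FTC: `∫_a^b du/(u-1) = log(1-b) - log(1-a)` for `a, b < 1`. -/
lemma int_invsub_lt {a b : ℝ} (ha : a < 1) (hb : b < 1) :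
    ∫ u in a..b, 1/(u-1) = Real.log (1-b) - Real.log (1-a) := by
  apply intervalIntegral.integral_eq_sub_of_hasDerivAt
    (f := fun u => Real.log (1-u))
  · intro u hu
    rw [Set.uIcc_eq_union] at hu
    have hu1 : u < 1 := by
      rcases hu with h | h <;> rcases h with ⟨_, h2⟩ <;> linarith
    have h := (Real.hasDerivAt_log (by linarith : 1 - u ≠ 0)).comp u
      (((hasDerivAt_id u).const_sub 1))
    have heq : (1-u)⁻¹ * (-1) = 1/(u-1) := by
      rw [one_div]
      rw [← neg_sub u 1, ← neg_inv]
      ring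
    simpa [heq, Function.comp_def] using h
  · exact invsub_integrable_lt ha hb

/-- FTC: `∫_0^1 du/(u+1) = log 2`. -/
lemma int_invadd : ∫ u in (0:ℝ)..1, 1/(u+1) = Real.log 2 := by
  have h : ∫ u in (0:ℝ)..1, 1/(u+1) = Real.log (1+1) - Real.log (0+1) := by
    apply intervalIntegral.integral_eq_sub_of_hasDerivAt
      (f := fun u => Real.log (u+1))
    · intro u hu
      rw [Set.uIcc_of_le (by norm_num : (0:ℝ) ≤ 1)] at hu
      have hu0 : 0 ≤ u := hu.1
      have h := (Real.hasDerivAt_log (by linarith : u + 1 ≠ 0)).comp u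
        ((hasDerivAt_id u).add_const 1)
      simpa [one_div, Function.comp_def] using h
    · apply ContinuousOn.intervalIntegrable
      apply ContinuousOn.div continuousOn_const (by fun_prop)
      intro u hu
      rw [Set.uIcc_of_le (by norm_num : (0:ℝ) ≤ 1)] at hu
      have := hu.1
      intro hc; linarith
  rw [h]
  norm_num

/-- `1/log` is interval integrable on intervals within `(1,∞)`. -/
lemma invlog_integrable {a b : ℝ} (ha : 1 < a) (hb : 1 < b) :
    IntervalIntegrable (fun u : ℝ => 1/Real.log u) volume a b := by
  apply ContinuousOn.intervalIntegrable
  have hsub : Set.uIcc a b ⊆ Set.Ioi 1 := by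
    rw [Set.uIcc_eq_union]
    intro u hu
    rcases hu with h | h <;> exact Set.mem_Ioi.2 (by rcases h with ⟨h1,_⟩; linarith)
  apply ContinuousOn.div continuousOn_const
  · exact Real.continuousOn_log.mono (fun u hu => by
      have := hsub hu
      simp only [Set.mem_Ioi] at this
      simp only [Set.mem_compl_iff, Set.mem_singleton_iff]
      intro h; rw [h] at this; linarith)
  · intro u hu
    have := Set.mem_Ioi.1 (hsub hu)
    exact ne_of_gt (Real.log_pos this)

/-- Step bound: `∫_a^b dt/log t ≤ (b-a)/lb` when `lb ≤ log a`. -/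
lemma int_invlog_le {a b lb : ℝ} (ha : 1 < a) (hab : a ≤ b) (hlb : 0 < lb)
    (hla : lb ≤ Real.log a) :
    ∫ t in a..b, 1/Real.log t ≤ (b-a) * (1/lb) := by
  have hb : 1 < b := lt_of_lt_of_le ha hab
  have h1 : ∫ t in a..b, 1/Real.log t ≤ ∫ t in a..b, 1/lb := by
    apply intervalIntegral.integral_mono_on hab (invlog_integrable ha hb)
      intervalIntegrable_const
    intro t ht
    have hta : a ≤ t := ht.1
    have : lb ≤ Real.log t := le_trans hla (Real.log_le_log (by linarith) hta)
    apply one_div_le_one_div_of_le hlb this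
  calc ∫ t in a..b, 1/Real.log t ≤ ∫ t in a..b, 1/lb := h1
  _ = (b-a) * (1/lb) := by
      rw [intervalIntegral.integral_const, smul_eq_mul]

/-- Evaluation of the principal value: for `x > 1`,
`li x = ∫_0^1 gli + ∫_1^x gli + log (x-1)`. -/
lemma li_eq {x : ℝ} (hx : 1 < x) :
    li x = (∫ u in (0:ℝ)..1, gli u) + (∫ u in (1:ℝ)..x, gli u) + Real.log (x-1) := by
  apply Filter.Tendsto.limUnder_eq
  set C : ℝ := (∫ u in (0:ℝ)..1, gli u) + (∫ u in (1:ℝ)..x, gli u) + Real.log (x-1) with hC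
  have h1 : Tendsto (fun ε : ℝ => ∫ u in (1-ε)..1, gli u) (nhdsWithin 0 (Set.Ioi 0)) (nhds 0) := by
    apply squeeze_zero_norm'
    · filter_upwards [Ioo_mem_nhdsGT_of_mem (Set.mem_Ico.2 ⟨le_refl (0:ℝ), zero_lt_one⟩)]
      intro ε hε
      rcases hε with ⟨hε0, hε1⟩
      have hb : ∀ u ∈ Set.uIoc (1-ε) 1, ‖gli u‖ ≤ 1 := by
        intro u hu
        rw [Set.uIoc_of_le (by linarith)] at hu
        have hu0 : 0 ≤ u := by rcases hu with ⟨hh, _⟩; linarith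
        rw [Real.norm_eq_abs, abs_le]
        exact ⟨by linarith [gli_nonneg hu0], gli_le_one hu0⟩
      calc ‖∫ u in (1-ε)..1, gli u‖ ≤ 1 * |1 - (1-ε)| :=
            intervalIntegral.norm_integral_le_of_norm_le_const hb
      _ = |ε| := by ring_nf
      _ = ε := abs_of_pos hε0
    · exact tendsto_id.mono_left nhdsWithin_le_nhds
  have h2 : Tendsto (fun ε : ℝ => ∫ u in (1:ℝ)..(1+ε), gli u) (nhdsWithin 0 (Set.Ioi 0)) (nhds 0) := by
    apply squeeze_zero_norm'
    · filter_upwards [Ioo_mem_nhdsGT_of_mem (Set.mem_Ico.2 ⟨le_refl (0:ℝ), zero_lt_one⟩)]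
      intro ε hε
      rcases hε with ⟨hε0, hε1⟩
      have hb : ∀ u ∈ Set.uIoc (1:ℝ) (1+ε), ‖gli u‖ ≤ 1 := by
        intro u hu
        rw [Set.uIoc_of_le (by linarith)] at hu
        have hu0 : 0 ≤ u := by rcases hu with ⟨hh, _⟩; linarith
        rw [Real.norm_eq_abs, abs_le]
        exact ⟨by linarith [gli_nonneg hu0], gli_le_one hu0⟩
      calc ‖∫ u in (1:ℝ)..(1+ε), gli u‖ ≤ 1 * |1 + ε - 1| :=
            intervalIntegral.norm_integral_le_of_norm_le_const hb
      _ = |ε| := by ring_nf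
      _ = ε := abs_of_pos hε0
    · exact tendsto_id.mono_left nhdsWithin_le_nhds
  have hmain : Tendsto (fun ε : ℝ => C - (∫ u in (1-ε)..1, gli u) - ∫ u in (1:ℝ)..(1+ε), gli u)
      (nhdsWithin 0 (Set.Ioi 0)) (nhds C) := by
    have := ((tendsto_const_nhds (x := C)).sub h1).sub h2
    simpa using this
  apply Tendsto.congr' _ hmain
  filter_upwards [Ioo_mem_nhdsGT_of_mem (Set.mem_Ico.2 ⟨le_refl (0:ℝ), zero_lt_one⟩)]
  intro ε hε
  rcases hε with ⟨hε0, hε1⟩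
  -- split the two integrals
  have e1 : ∫ u in (0:ℝ)..(1-ε), 1/Real.log u
      = (∫ u in (0:ℝ)..(1-ε), gli u) + Real.log ε := by
    have hsplit : ∫ u in (0:ℝ)..(1-ε), 1/Real.log u
        = (∫ u in (0:ℝ)..(1-ε), gli u) + ∫ u in (0:ℝ)..(1-ε), 1/(u-1) := by
      rw [← intervalIntegral.integral_add (gli_intervalIntegrable le_rfl (by linarith))
        (invsub_integrable_lt (by linarith) (by linarith))]
      apply intervalIntegral.integral_congr
      intro u _
      exact gli_add u
    rw [hsplit, int_invsub_lt (by linarith) (by linarith)]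
    norm_num
  have e2 : ∫ u in (1+ε)..x, 1/Real.log u
      = (∫ u in (1+ε)..x, gli u) + (Real.log (x-1) - Real.log ε) := by
    have hsplit : ∫ u in (1+ε)..x, 1/Real.log u
        = (∫ u in (1+ε)..x, gli u) + ∫ u in (1+ε)..x, 1/(u-1) := by
      rw [← intervalIntegral.integral_add (gli_intervalIntegrable (by linarith) (by linarith))
        (invsub_integrable_gt (by linarith) hx)]
      apply intervalIntegral.integral_congr
      intro u _
      exact gli_add u
    rw [hsplit, int_invsub_gt (by linarith) hx]
    simp
  have a1 : (∫ u in (0:ℝ)..(1-ε), gli u) + ∫ u in (1-ε)..1, gli u = ∫ u in (0:ℝ)..1, gli u :=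
    intervalIntegral.integral_add_adjacent_intervals
      (gli_intervalIntegrable le_rfl (by linarith))
      (gli_intervalIntegrable (by linarith) (by norm_num))
  have a2 : (∫ u in (1:ℝ)..(1+ε), gli u) + ∫ u in (1+ε)..x, gli u = ∫ u in (1:ℝ)..x, gli u :=
    intervalIntegral.integral_add_adjacent_intervals
      (gli_intervalIntegrable (by norm_num) (by linarith))
      (gli_intervalIntegrable (by linarith) (by linarith))
  show C - (∫ u in (1-ε)..1, gli u) - (∫ u in (1:ℝ)..(1+ε), gli u)
      = (∫ u in (0:ℝ)..(1-ε), 1/Real.log u) + ∫ u in (1+ε)..x, 1/Real.log u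
  rw [e1, e2, hC]
  linarith [a1, a2]

/-- Anchor identity: `li x = li y + ∫_y^x dt/log t` for `x, y > 1`. -/
lemma li_anchor {x y : ℝ} (hx : 1 < x) (hy : 1 < y) :
    li x = li y + ∫ t in y..x, 1/Real.log t := by
  rw [li_eq hx, li_eq hy]
  have a1 : (∫ u in (1:ℝ)..y, gli u) + ∫ u in y..x, gli u = ∫ u in (1:ℝ)..x, gli u :=
    intervalIntegral.integral_add_adjacent_intervals
      (gli_intervalIntegrable (by norm_num) (by linarith))
      (gli_intervalIntegrable (by linarith) (by linarith))
  have hsplit : ∫ u in y..x, 1/Real.log u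
      = (∫ u in y..x, gli u) + ∫ u in y..x, 1/(u-1) := by
    rw [← intervalIntegral.integral_add (gli_intervalIntegrable (by linarith) (by linarith))
      (invsub_integrable_gt hy hx)]
    apply intervalIntegral.integral_congr
    intro u _
    exact gli_add u
  rw [hsplit, int_invsub_gt hy hx]
  linarith [a1]

/-- The comparison function. -/
noncomputable def Gfun (s : ℝ) : ℝ :=
  s/Real.log s + 2*s/(Real.log s)^2 - ∫ u in (2:ℝ)..s, 1/Real.log u

lemma Gfun_hasDeriv {t : ℝ} (ht : 1 < t) :
    HasDerivAt Gfun (1/(Real.log t)^2 - 4/(Real.log t)^3) t := by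
  have ht0 : (0:ℝ) < t := by linarith
  have hl0 : 0 < Real.log t := Real.log_pos ht
  have hlne : Real.log t ≠ 0 := ne_of_gt hl0
  have hlog := Real.hasDerivAt_log (ne_of_gt ht0)
  have hd1 : HasDerivAt (fun s : ℝ => s/Real.log s)
      ((1*Real.log t - t*t⁻¹)/(Real.log t)^2) t := by
    have := (hasDerivAt_id t).div hlog hlne
    simpa [one_div, Pi.div_def] using this
  have hd2 : HasDerivAt (fun s : ℝ => 2*s/(Real.log s)^2)
      ((2*(Real.log t)^2 - 2*t*(2*Real.log t*t⁻¹))/((Real.log t)^2)^2) t := by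
    have hnum : HasDerivAt (fun s : ℝ => 2*s) 2 t := by
      simpa using (hasDerivAt_id t).const_mul 2
    have hden : HasDerivAt (fun s : ℝ => (Real.log s)^2) (2*Real.log t^1*t⁻¹) t := by
      have := hlog.pow 2
      simpa [Pi.pow_def] using this
    have := hnum.div hden (by positivity)
    simpa [one_div, Pi.div_def] using this
  have hd3 : HasDerivAt (fun s : ℝ => ∫ u in (2:ℝ)..s, 1/Real.log u) (1/Real.log t) t := by
    apply intervalIntegral.integral_hasDerivAt_right
      (invlog_integrable one_lt_two ht)
    · exact (measurable_const.div Real.measurable_log).stronglyMeasurable.stronglyMeasurableAtFilter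
    · apply ContinuousAt.div continuousAt_const
        (Real.continuousAt_log (ne_of_gt ht0)) hlne
  have := (hd1.add hd2).sub hd3
  refine this.congr_deriv ?_
  field_simp
  ring

lemma Gfun_min {x : ℝ} (hx : 1 < x) : Gfun (Real.exp 4) ≤ Gfun x := by
  have he1 : (1:ℝ) < Real.exp 4 := by
    have := Real.add_one_le_exp (4:ℝ)
    linarith
  rcases le_total x (Real.exp 4) with hc | hc
  · have hanti : AntitoneOn Gfun (Set.Icc x (Real.exp 4)) := by
      apply antitoneOn_of_deriv_nonpos (convex_Icc _ _)
      · intro t ht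
        exact (Gfun_hasDeriv (lt_of_lt_of_le hx ht.1)).continuousAt.continuousWithinAt
      · intro t ht
        rw [interior_Icc] at ht
        exact (Gfun_hasDeriv (lt_trans hx ht.1)).differentiableAt.differentiableWithinAt
      · intro t ht
        rw [interior_Icc] at ht
        have ht1 : 1 < t := lt_trans hx ht.1
        rw [(Gfun_hasDeriv ht1).deriv]
        have hl0 : 0 < Real.log t := Real.log_pos ht1
        have hl4 : Real.log t ≤ 4 := by
          have h2 := Real.log_lt_log (by linarith : (0:ℝ) < t) ht.2
          rw [Real.log_exp] at h2
          linarith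
        have key : 1/(Real.log t)^2 - 4/(Real.log t)^3
            = (Real.log t - 4)/(Real.log t)^3 := by
          field_simp
        rw [key]
        apply div_nonpos_of_nonpos_of_nonneg (by linarith) (by positivity)
    exact hanti (Set.mem_Icc.2 ⟨le_refl x, hc⟩) (Set.mem_Icc.2 ⟨hc, le_refl _⟩) hc
  · have hmono : MonotoneOn Gfun (Set.Icc (Real.exp 4) x) := by
      apply monotoneOn_of_deriv_nonneg (convex_Icc _ _)
      · intro t ht
        exact (Gfun_hasDeriv (lt_of_lt_of_le he1 ht.1)).continuousAt.continuousWithinAt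
      · intro t ht
        rw [interior_Icc] at ht
        exact (Gfun_hasDeriv (lt_trans he1 ht.1)).differentiableAt.differentiableWithinAt
      · intro t ht
        rw [interior_Icc] at ht
        have ht1 : 1 < t := lt_trans he1 ht.1
        rw [(Gfun_hasDeriv ht1).deriv]
        have hl0 : 0 < Real.log t := Real.log_pos ht1
        have hl4 : 4 ≤ Real.log t := by
          have h2 := Real.log_lt_log (by positivity : (0:ℝ) < Real.exp 4) ht.1
          rw [Real.log_exp] at h2
          linarith
        have key : 1/(Real.log t)^2 - 4/(Real.log t)^3
            = (Real.log t - 4)/(Real.log t)^3 := by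
          field_simp
        rw [key]
        apply div_nonneg (by linarith) (by positivity)
    exact hmono (Set.mem_Icc.2 ⟨le_refl _, hc⟩) (Set.mem_Icc.2 ⟨hc, le_refl x⟩) hc

/-- Lower bound for `log` via dyadic reduction and the Padé bound. -/
lemma log_lb (a m c : ℝ) (j : ℕ) (hm : a = 2^j * m) (h1 : 1 ≤ m)
    (hc : c ≤ (j:ℝ) * 0.6931471803 + 3*(m^2-1)/(m^2+4*m+1)) : c ≤ Real.log a := by
  rw [hm, Real.log_mul (by positivity) (by linarith), Real.log_pow]
  have hp := pade3 h1
  have hl2 := Real.log_two_gt_d9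
  have hj : (j:ℝ) * 0.6931471803 ≤ (j:ℝ) * Real.log 2 := by
    apply mul_le_mul_of_nonneg_left (le_of_lt hl2) (Nat.cast_nonneg j)
  calc c ≤ (j:ℝ) * 0.6931471803 + 3*(m^2-1)/(m^2+4*m+1) := hc
  _ ≤ (j:ℝ) * Real.log 2 + Real.log m := by linarith

lemma exp4_bounds : (54.5981:ℝ) ≤ Real.exp 4 ∧ Real.exp 4 ≤ 54.5982 := by
  have h : Real.exp 4 = Real.exp 1 ^ (4:ℕ) := by
    rw [← Real.exp_nat_mul]; norm_num
  have e1 := Real.exp_one_gt_d9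
  have e2 := Real.exp_one_lt_d9
  have hl : (2.7182818283:ℝ)^(4:ℕ) ≤ Real.exp 1 ^ (4:ℕ) :=
    pow_le_pow_left₀ (by norm_num) e1.le 4
  have hu : Real.exp 1 ^ (4:ℕ) ≤ (2.7182818286:ℝ)^(4:ℕ) :=
    pow_le_pow_left₀ (Real.exp_pos 1).le e2.le 4
  have c1 : (54.5981:ℝ) ≤ (2.7182818283:ℝ)^(4:ℕ) := by norm_num
  have c2 : ((2.7182818286:ℝ))^(4:ℕ) ≤ 54.5982 := by norm_num
  rw [h]
  exact ⟨le_trans c1 hl, le_trans hu c2⟩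

set_option maxHeartbeats 4000000 in
lemma riemann_bound :
    (∫ t in (1.5:ℝ)..Real.exp 4, 1/Real.log t) ≤ 20.157 := by
  obtain ⟨hlb4, hub4⟩ := exp4_bounds
  have he4 : (1:ℝ) < Real.exp 4 := by linarith
  have hL0 : ((2027027/5000000):ℝ) ≤ Real.log 1.5 := log_lb 1.5 (3/2) (2027027/5000000) 0 (by norm_num) (by norm_num) (by norm_num)
  have hL1 : ((4761017/10000000):ℝ) ≤ Real.log 1.61 := log_lb 1.61 (161/100) (4761017/10000000) 0 (by norm_num) (by norm_num) (by norm_num)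
  have hL2 : ((279661/500000):ℝ) ≤ Real.log 1.75 := log_lb 1.75 (7/4) (279661/500000) 0 (by norm_num) (by norm_num) (by norm_num)
  have hL3 : ((6517013/10000000):ℝ) ≤ Real.log 1.92 := log_lb 1.92 (48/25) (6517013/10000000) 0 (by norm_num) (by norm_num) (by norm_num)
  have hL4 : ((7561219/10000000):ℝ) ≤ Real.log 2.13 := log_lb 2.13 (213/200) (7561219/10000000) 1 (by norm_num) (by norm_num) (by norm_num)
  have hL5 : ((8712923/10000000):ℝ) ≤ Real.log 2.39 := log_lb 2.39 (239/200) (8712923/10000000) 1 (by norm_num) (by norm_num) (by norm_num)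
  have hL6 : ((155771/156250):ℝ) ≤ Real.log 2.71 := log_lb 2.71 (271/200) (155771/156250) 1 (by norm_num) (by norm_num) (by norm_num)
  have hL7 : ((11313143/10000000):ℝ) ≤ Real.log 3.1 := log_lb 3.1 (31/20) (11313143/10000000) 1 (by norm_num) (by norm_num) (by norm_num)
  have hL8 : ((12722169/10000000):ℝ) ≤ Real.log 3.57 := log_lb 3.57 (357/200) (12722169/10000000) 1 (by norm_num) (by norm_num) (by norm_num)
  have hL9 : ((14206957/10000000):ℝ) ≤ Real.log 4.14 := log_lb 4.14 (207/200) (14206957/10000000) 2 (by norm_num) (by norm_num) (by norm_num)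
  have hL10 : ((7863863/5000000):ℝ) ≤ Real.log 4.82 := log_lb 4.82 (241/200) (7863863/5000000) 2 (by norm_num) (by norm_num) (by norm_num)
  have hL11 : ((8640419/5000000):ℝ) ≤ Real.log 5.63 := log_lb 5.63 (563/400) (8640419/5000000) 2 (by norm_num) (by norm_num) (by norm_num)
  have hL12 : ((9434499/5000000):ℝ) ≤ Real.log 6.6 := log_lb 6.6 (33/20) (9434499/5000000) 2 (by norm_num) (by norm_num) (by norm_num)
  have hL13 : ((4091481/2000000):ℝ) ≤ Real.log 7.74 := log_lb 7.74 (387/200) (4091481/2000000) 2 (by norm_num) (by norm_num) (by norm_num)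
  have hL14 : ((1103037/500000):ℝ) ≤ Real.log 9.08 := log_lb 9.08 (227/200) (1103037/500000) 3 (by norm_num) (by norm_num) (by norm_num)
  have hL15 : ((23646101/10000000):ℝ) ≤ Real.log 10.64 := log_lb 10.64 (133/100) (23646101/10000000) 3 (by norm_num) (by norm_num) (by norm_num)
  have hL16 : ((25216287/10000000):ℝ) ≤ Real.log 12.45 := log_lb 12.45 (249/160) (25216287/10000000) 3 (by norm_num) (by norm_num) (by norm_num)
  have hL17 : ((6689531/2500000):ℝ) ≤ Real.log 14.53 := log_lb 14.53 (1453/800) (6689531/2500000) 3 (by norm_num) (by norm_num) (by norm_num)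
  have hL18 : ((28279051/10000000):ℝ) ≤ Real.log 16.91 := log_lb 16.91 (1691/1600) (28279051/10000000) 4 (by norm_num) (by norm_num) (by norm_num)
  have hL19 : ((1190619/400000):ℝ) ≤ Real.log 19.62 := log_lb 19.62 (981/800) (1190619/400000) 4 (by norm_num) (by norm_num) (by norm_num)
  have hL20 : ((15609479/5000000):ℝ) ≤ Real.log 22.69 := log_lb 22.69 (2269/1600) (15609479/5000000) 4 (by norm_num) (by norm_num) (by norm_num)
  have hL21 : ((4079141/1250000):ℝ) ≤ Real.log 26.14 := log_lb 26.14 (1307/800) (4079141/1250000) 4 (by norm_num) (by norm_num) (by norm_num)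
  have hL22 : ((3401009/1000000):ℝ) ≤ Real.log 30.01 := log_lb 30.01 (3001/1600) (3401009/1000000) 4 (by norm_num) (by norm_num) (by norm_num)
  have hL23 : ((17678641/5000000):ℝ) ≤ Real.log 34.32 := log_lb 34.32 (429/400) (17678641/5000000) 5 (by norm_num) (by norm_num) (by norm_num)
  have hL24 : ((36663763/10000000):ℝ) ≤ Real.log 39.11 := log_lb 39.11 (3911/3200) (36663763/10000000) 5 (by norm_num) (by norm_num) (by norm_num)
  have hL25 : ((9483047/2500000):ℝ) ≤ Real.log 44.4 := log_lb 44.4 (111/80) (9483047/2500000) 5 (by norm_num) (by norm_num) (by norm_num)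
  have hL26 : ((19582557/5000000):ℝ) ≤ Real.log 50.23 := log_lb 50.23 (5023/3200) (19582557/5000000) 5 (by norm_num) (by norm_num) (by norm_num)
  have hL27 : ((9999043/2500000):ℝ) ≤ Real.log 54.59 := log_lb 54.59 (5459/3200) (9999043/2500000) 5 (by norm_num) (by norm_num) (by norm_num)
  have hB27 : ∫ t in (54.59:ℝ)..Real.exp 4, 1/Real.log t ≤ ((2051/1000000):ℝ) := by
    have h1 : ∫ t in (54.59:ℝ)..Real.exp 4, 1/Real.log t ≤ (Real.exp 4 - 54.59) * (1/(9999043/2500000)) :=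
      int_invlog_le (by norm_num) (by linarith) (by norm_num) hL27
    have h2 : (Real.exp 4 - 54.59) * ((1:ℝ)/(9999043/2500000)) ≤ (54.5982 - 54.59) * (1/(9999043/2500000)) := by
      apply mul_le_mul_of_nonneg_right (by linarith) (by norm_num)
    have h3 : ((54.5982:ℝ) - 54.59) * (1/(9999043/2500000)) ≤ (2051/1000000) := by norm_num
    linarith
  have hB26 : ∫ t in (50.23:ℝ)..Real.exp 4, 1/Real.log t ≤ ((1115287/1000000):ℝ) := by
    have hs : (∫ t in (50.23:ℝ)..54.59, 1/Real.log t) + (∫ t in (54.59:ℝ)..Real.exp 4, 1/Real.log t) = ∫ t in (50.23:ℝ)..Real.exp 4, 1/Real.log t :=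
      intervalIntegral.integral_add_adjacent_intervals (invlog_integrable (by norm_num) (by norm_num)) (invlog_integrable (by norm_num) he4)
    have hp : ∫ t in (50.23:ℝ)..54.59, 1/Real.log t ≤ (54.59 - 50.23) * (1/(19582557/5000000)) :=
      int_invlog_le (by norm_num) (by norm_num) (by norm_num) hL26
    have h3 : (54.59 - 50.23) * ((1:ℝ)/(19582557/5000000)) + (2051/1000000) ≤ (1115287/1000000) := by norm_num
    linarith [hB27]
  have hB25 : ∫ t in (44.4:ℝ)..Real.exp 4, 1/Real.log t ≤ ((2652241/1000000):ℝ) := by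
    have hs : (∫ t in (44.4:ℝ)..50.23, 1/Real.log t) + (∫ t in (50.23:ℝ)..Real.exp 4, 1/Real.log t) = ∫ t in (44.4:ℝ)..Real.exp 4, 1/Real.log t :=
      intervalIntegral.integral_add_adjacent_intervals (invlog_integrable (by norm_num) (by norm_num)) (invlog_integrable (by norm_num) he4)
    have hp : ∫ t in (44.4:ℝ)..50.23, 1/Real.log t ≤ (50.23 - 44.4) * (1/(9483047/2500000)) :=
      int_invlog_le (by norm_num) (by norm_num) (by norm_num) hL25
    have h3 : (50.23 - 44.4) * ((1:ℝ)/(9483047/2500000)) + (1115287/1000000) ≤ (2652241/1000000) := by norm_num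
    linarith [hB26]
  have hB24 : ∫ t in (39.11:ℝ)..Real.exp 4, 1/Real.log t ≤ ((4095083/1000000):ℝ) := by
    have hs : (∫ t in (39.11:ℝ)..44.4, 1/Real.log t) + (∫ t in (44.4:ℝ)..Real.exp 4, 1/Real.log t) = ∫ t in (39.11:ℝ)..Real.exp 4, 1/Real.log t :=
      intervalIntegral.integral_add_adjacent_intervals (invlog_integrable (by norm_num) (by norm_num)) (invlog_integrable (by norm_num) he4)
    have hp : ∫ t in (39.11:ℝ)..44.4, 1/Real.log t ≤ (44.4 - 39.11) * (1/(36663763/10000000)) :=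
      int_invlog_le (by norm_num) (by norm_num) (by norm_num) hL24
    have h3 : (44.4 - 39.11) * ((1:ℝ)/(36663763/10000000)) + (2652241/1000000) ≤ (4095083/1000000) := by norm_num
    linarith [hB25]
  have hB23 : ∫ t in (34.32:ℝ)..Real.exp 4, 1/Real.log t ≤ ((2724913/500000):ℝ) := by
    have hs : (∫ t in (34.32:ℝ)..39.11, 1/Real.log t) + (∫ t in (39.11:ℝ)..Real.exp 4, 1/Real.log t) = ∫ t in (34.32:ℝ)..Real.exp 4, 1/Real.log t :=
      intervalIntegral.integral_add_adjacent_intervals (invlog_integrable (by norm_num) (by norm_num)) (invlog_integrable (by norm_num) he4)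
    have hp : ∫ t in (34.32:ℝ)..39.11, 1/Real.log t ≤ (39.11 - 34.32) * (1/(17678641/5000000)) :=
      int_invlog_le (by norm_num) (by norm_num) (by norm_num) hL23
    have h3 : (39.11 - 34.32) * ((1:ℝ)/(17678641/5000000)) + (4095083/1000000) ≤ (2724913/500000) := by norm_num
    linarith [hB24]
  have hB22 : ∫ t in (30.01:ℝ)..Real.exp 4, 1/Real.log t ≤ ((6717097/1000000):ℝ) := by
    have hs : (∫ t in (30.01:ℝ)..34.32, 1/Real.log t) + (∫ t in (34.32:ℝ)..Real.exp 4, 1/Real.log t) = ∫ t in (30.01:ℝ)..Real.exp 4, 1/Real.log t :=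
      intervalIntegral.integral_add_adjacent_intervals (invlog_integrable (by norm_num) (by norm_num)) (invlog_integrable (by norm_num) he4)
    have hp : ∫ t in (30.01:ℝ)..34.32, 1/Real.log t ≤ (34.32 - 30.01) * (1/(3401009/1000000)) :=
      int_invlog_le (by norm_num) (by norm_num) (by norm_num) hL22
    have h3 : (34.32 - 30.01) * ((1:ℝ)/(3401009/1000000)) + (2724913/500000) ≤ (6717097/1000000) := by norm_num
    linarith [hB23]
  have hB21 : ∫ t in (26.14:ℝ)..Real.exp 4, 1/Real.log t ≤ ((7903009/1000000):ℝ) := by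
    have hs : (∫ t in (26.14:ℝ)..30.01, 1/Real.log t) + (∫ t in (30.01:ℝ)..Real.exp 4, 1/Real.log t) = ∫ t in (26.14:ℝ)..Real.exp 4, 1/Real.log t :=
      intervalIntegral.integral_add_adjacent_intervals (invlog_integrable (by norm_num) (by norm_num)) (invlog_integrable (by norm_num) he4)
    have hp : ∫ t in (26.14:ℝ)..30.01, 1/Real.log t ≤ (30.01 - 26.14) * (1/(4079141/1250000)) :=
      int_invlog_le (by norm_num) (by norm_num) (by norm_num) hL21
    have h3 : (30.01 - 26.14) * ((1:ℝ)/(4079141/1250000)) + (6717097/1000000) ≤ (7903009/1000000) := by norm_num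
    linarith [hB22]
  have hB20 : ∫ t in (22.69:ℝ)..Real.exp 4, 1/Real.log t ≤ ((9008107/1000000):ℝ) := by
    have hs : (∫ t in (22.69:ℝ)..26.14, 1/Real.log t) + (∫ t in (26.14:ℝ)..Real.exp 4, 1/Real.log t) = ∫ t in (22.69:ℝ)..Real.exp 4, 1/Real.log t :=
      intervalIntegral.integral_add_adjacent_intervals (invlog_integrable (by norm_num) (by norm_num)) (invlog_integrable (by norm_num) he4)
    have hp : ∫ t in (22.69:ℝ)..26.14, 1/Real.log t ≤ (26.14 - 22.69) * (1/(15609479/5000000)) :=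
      int_invlog_le (by norm_num) (by norm_num) (by norm_num) hL20
    have h3 : (26.14 - 22.69) * ((1:ℝ)/(15609479/5000000)) + (7903009/1000000) ≤ (9008107/1000000) := by norm_num
    linarith [hB21]
  have hB19 : ∫ t in (19.62:ℝ)..Real.exp 4, 1/Real.log t ≤ ((627469/62500):ℝ) := by
    have hs : (∫ t in (19.62:ℝ)..22.69, 1/Real.log t) + (∫ t in (22.69:ℝ)..Real.exp 4, 1/Real.log t) = ∫ t in (19.62:ℝ)..Real.exp 4, 1/Real.log t :=
      intervalIntegral.integral_add_adjacent_intervals (invlog_integrable (by norm_num) (by norm_num)) (invlog_integrable (by norm_num) he4)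
    have hp : ∫ t in (19.62:ℝ)..22.69, 1/Real.log t ≤ (22.69 - 19.62) * (1/(1190619/400000)) :=
      int_invlog_le (by norm_num) (by norm_num) (by norm_num) hL19
    have h3 : (22.69 - 19.62) * ((1:ℝ)/(1190619/400000)) + (9008107/1000000) ≤ (627469/62500) := by norm_num
    linarith [hB20]
  have hB18 : ∫ t in (16.91:ℝ)..Real.exp 4, 1/Real.log t ≤ ((10997811/1000000):ℝ) := by
    have hs : (∫ t in (16.91:ℝ)..19.62, 1/Real.log t) + (∫ t in (19.62:ℝ)..Real.exp 4, 1/Real.log t) = ∫ t in (16.91:ℝ)..Real.exp 4, 1/Real.log t :=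
      intervalIntegral.integral_add_adjacent_intervals (invlog_integrable (by norm_num) (by norm_num)) (invlog_integrable (by norm_num) he4)
    have hp : ∫ t in (16.91:ℝ)..19.62, 1/Real.log t ≤ (19.62 - 16.91) * (1/(28279051/10000000)) :=
      int_invlog_le (by norm_num) (by norm_num) (by norm_num) hL18
    have h3 : (19.62 - 16.91) * ((1:ℝ)/(28279051/10000000)) + (627469/62500) ≤ (10997811/1000000) := by norm_num
    linarith [hB19]
  have hB17 : ∫ t in (14.53:ℝ)..Real.exp 4, 1/Real.log t ≤ ((11887261/1000000):ℝ) := by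
    have hs : (∫ t in (14.53:ℝ)..16.91, 1/Real.log t) + (∫ t in (16.91:ℝ)..Real.exp 4, 1/Real.log t) = ∫ t in (14.53:ℝ)..Real.exp 4, 1/Real.log t :=
      intervalIntegral.integral_add_adjacent_intervals (invlog_integrable (by norm_num) (by norm_num)) (invlog_integrable (by norm_num) he4)
    have hp : ∫ t in (14.53:ℝ)..16.91, 1/Real.log t ≤ (16.91 - 14.53) * (1/(6689531/2500000)) :=
      int_invlog_le (by norm_num) (by norm_num) (by norm_num) hL17
    have h3 : (16.91 - 14.53) * ((1:ℝ)/(6689531/2500000)) + (10997811/1000000) ≤ (11887261/1000000) := by norm_num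
    linarith [hB18]
  have hB16 : ∫ t in (12.45:ℝ)..Real.exp 4, 1/Real.log t ≤ ((101697/8000):ℝ) := by
    have hs : (∫ t in (12.45:ℝ)..14.53, 1/Real.log t) + (∫ t in (14.53:ℝ)..Real.exp 4, 1/Real.log t) = ∫ t in (12.45:ℝ)..Real.exp 4, 1/Real.log t :=
      intervalIntegral.integral_add_adjacent_intervals (invlog_integrable (by norm_num) (by norm_num)) (invlog_integrable (by norm_num) he4)
    have hp : ∫ t in (12.45:ℝ)..14.53, 1/Real.log t ≤ (14.53 - 12.45) * (1/(25216287/10000000)) :=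
      int_invlog_le (by norm_num) (by norm_num) (by norm_num) hL16
    have h3 : (14.53 - 12.45) * ((1:ℝ)/(25216287/10000000)) + (11887261/1000000) ≤ (101697/8000) := by norm_num
    linarith [hB17]
  have hB15 : ∫ t in (10.64:ℝ)..Real.exp 4, 1/Real.log t ≤ ((13477579/1000000):ℝ) := by
    have hs : (∫ t in (10.64:ℝ)..12.45, 1/Real.log t) + (∫ t in (12.45:ℝ)..Real.exp 4, 1/Real.log t) = ∫ t in (10.64:ℝ)..Real.exp 4, 1/Real.log t :=
      intervalIntegral.integral_add_adjacent_intervals (invlog_integrable (by norm_num) (by norm_num)) (invlog_integrable (by norm_num) he4)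
    have hp : ∫ t in (10.64:ℝ)..12.45, 1/Real.log t ≤ (12.45 - 10.64) * (1/(23646101/10000000)) :=
      int_invlog_le (by norm_num) (by norm_num) (by norm_num) hL15
    have h3 : (12.45 - 10.64) * ((1:ℝ)/(23646101/10000000)) + (101697/8000) ≤ (13477579/1000000) := by norm_num
    linarith [hB16]
  have hB14 : ∫ t in (9.08:ℝ)..Real.exp 4, 1/Real.log t ≤ ((7092359/500000):ℝ) := by
    have hs : (∫ t in (9.08:ℝ)..10.64, 1/Real.log t) + (∫ t in (10.64:ℝ)..Real.exp 4, 1/Real.log t) = ∫ t in (9.08:ℝ)..Real.exp 4, 1/Real.log t :=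
      intervalIntegral.integral_add_adjacent_intervals (invlog_integrable (by norm_num) (by norm_num)) (invlog_integrable (by norm_num) he4)
    have hp : ∫ t in (9.08:ℝ)..10.64, 1/Real.log t ≤ (10.64 - 9.08) * (1/(1103037/500000)) :=
      int_invlog_le (by norm_num) (by norm_num) (by norm_num) hL14
    have h3 : (10.64 - 9.08) * ((1:ℝ)/(1103037/500000)) + (13477579/1000000) ≤ (7092359/500000) := by norm_num
    linarith [hB15]
  have hB13 : ∫ t in (7.74:ℝ)..Real.exp 4, 1/Real.log t ≤ ((7419869/500000):ℝ) := by
    have hs : (∫ t in (7.74:ℝ)..9.08, 1/Real.log t) + (∫ t in (9.08:ℝ)..Real.exp 4, 1/Real.log t) = ∫ t in (7.74:ℝ)..Real.exp 4, 1/Real.log t :=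
      intervalIntegral.integral_add_adjacent_intervals (invlog_integrable (by norm_num) (by norm_num)) (invlog_integrable (by norm_num) he4)
    have hp : ∫ t in (7.74:ℝ)..9.08, 1/Real.log t ≤ (9.08 - 7.74) * (1/(4091481/2000000)) :=
      int_invlog_le (by norm_num) (by norm_num) (by norm_num) hL13
    have h3 : (9.08 - 7.74) * ((1:ℝ)/(4091481/2000000)) + (7092359/500000) ≤ (7419869/500000) := by norm_num
    linarith [hB14]
  have hB12 : ∫ t in (6.6:ℝ)..Real.exp 4, 1/Real.log t ≤ ((241311/15625):ℝ) := by
    have hs : (∫ t in (6.6:ℝ)..7.74, 1/Real.log t) + (∫ t in (7.74:ℝ)..Real.exp 4, 1/Real.log t) = ∫ t in (6.6:ℝ)..Real.exp 4, 1/Real.log t :=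
      intervalIntegral.integral_add_adjacent_intervals (invlog_integrable (by norm_num) (by norm_num)) (invlog_integrable (by norm_num) he4)
    have hp : ∫ t in (6.6:ℝ)..7.74, 1/Real.log t ≤ (7.74 - 6.6) * (1/(9434499/5000000)) :=
      int_invlog_le (by norm_num) (by norm_num) (by norm_num) hL12
    have h3 : (7.74 - 6.6) * ((1:ℝ)/(9434499/5000000)) + (7419869/500000) ≤ (241311/15625) := by norm_num
    linarith [hB13]
  have hB11 : ∫ t in (5.63:ℝ)..Real.exp 4, 1/Real.log t ≤ ((800261/50000):ℝ) := by
    have hs : (∫ t in (5.63:ℝ)..6.6, 1/Real.log t) + (∫ t in (6.6:ℝ)..Real.exp 4, 1/Real.log t) = ∫ t in (5.63:ℝ)..Real.exp 4, 1/Real.log t :=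
      intervalIntegral.integral_add_adjacent_intervals (invlog_integrable (by norm_num) (by norm_num)) (invlog_integrable (by norm_num) he4)
    have hp : ∫ t in (5.63:ℝ)..6.6, 1/Real.log t ≤ (6.6 - 5.63) * (1/(8640419/5000000)) :=
      int_invlog_le (by norm_num) (by norm_num) (by norm_num) hL11
    have h3 : (6.6 - 5.63) * ((1:ℝ)/(8640419/5000000)) + (241311/15625) ≤ (800261/50000) := by norm_num
    linarith [hB12]
  have hB10 : ∫ t in (4.82:ℝ)..Real.exp 4, 1/Real.log t ≤ ((3304047/200000):ℝ) := by
    have hs : (∫ t in (4.82:ℝ)..5.63, 1/Real.log t) + (∫ t in (5.63:ℝ)..Real.exp 4, 1/Real.log t) = ∫ t in (4.82:ℝ)..Real.exp 4, 1/Real.log t :=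
      intervalIntegral.integral_add_adjacent_intervals (invlog_integrable (by norm_num) (by norm_num)) (invlog_integrable (by norm_num) he4)
    have hp : ∫ t in (4.82:ℝ)..5.63, 1/Real.log t ≤ (5.63 - 4.82) * (1/(7863863/5000000)) :=
      int_invlog_le (by norm_num) (by norm_num) (by norm_num) hL10
    have h3 : (5.63 - 4.82) * ((1:ℝ)/(7863863/5000000)) + (800261/50000) ≤ (3304047/200000) := by norm_num
    linarith [hB11]
  have hB9 : ∫ t in (4.14:ℝ)..Real.exp 4, 1/Real.log t ≤ ((8499437/500000):ℝ) := by
    have hs : (∫ t in (4.14:ℝ)..4.82, 1/Real.log t) + (∫ t in (4.82:ℝ)..Real.exp 4, 1/Real.log t) = ∫ t in (4.14:ℝ)..Real.exp 4, 1/Real.log t :=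
      intervalIntegral.integral_add_adjacent_intervals (invlog_integrable (by norm_num) (by norm_num)) (invlog_integrable (by norm_num) he4)
    have hp : ∫ t in (4.14:ℝ)..4.82, 1/Real.log t ≤ (4.82 - 4.14) * (1/(14206957/10000000)) :=
      int_invlog_le (by norm_num) (by norm_num) (by norm_num) hL9
    have h3 : (4.82 - 4.14) * ((1:ℝ)/(14206957/10000000)) + (3304047/200000) ≤ (8499437/500000) := by norm_num
    linarith [hB10]
  have hB8 : ∫ t in (3.57:ℝ)..Real.exp 4, 1/Real.log t ≤ ((17446911/1000000):ℝ) := by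
    have hs : (∫ t in (3.57:ℝ)..4.14, 1/Real.log t) + (∫ t in (4.14:ℝ)..Real.exp 4, 1/Real.log t) = ∫ t in (3.57:ℝ)..Real.exp 4, 1/Real.log t :=
      intervalIntegral.integral_add_adjacent_intervals (invlog_integrable (by norm_num) (by norm_num)) (invlog_integrable (by norm_num) he4)
    have hp : ∫ t in (3.57:ℝ)..4.14, 1/Real.log t ≤ (4.14 - 3.57) * (1/(12722169/10000000)) :=
      int_invlog_le (by norm_num) (by norm_num) (by norm_num) hL8
    have h3 : (4.14 - 3.57) * ((1:ℝ)/(12722169/10000000)) + (8499437/500000) ≤ (17446911/1000000) := by norm_num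
    linarith [hB9]
  have hB7 : ∫ t in (3.1:ℝ)..Real.exp 4, 1/Real.log t ≤ ((17862357/1000000):ℝ) := by
    have hs : (∫ t in (3.1:ℝ)..3.57, 1/Real.log t) + (∫ t in (3.57:ℝ)..Real.exp 4, 1/Real.log t) = ∫ t in (3.1:ℝ)..Real.exp 4, 1/Real.log t :=
      intervalIntegral.integral_add_adjacent_intervals (invlog_integrable (by norm_num) (by norm_num)) (invlog_integrable (by norm_num) he4)
    have hp : ∫ t in (3.1:ℝ)..3.57, 1/Real.log t ≤ (3.57 - 3.1) * (1/(11313143/10000000)) :=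
      int_invlog_le (by norm_num) (by norm_num) (by norm_num) hL7
    have h3 : (3.57 - 3.1) * ((1:ℝ)/(11313143/10000000)) + (17446911/1000000) ≤ (17862357/1000000) := by norm_num
    linarith [hB8]
  have hB6 : ∫ t in (2.71:ℝ)..Real.exp 4, 1/Real.log t ≤ ((18253557/1000000):ℝ) := by
    have hs : (∫ t in (2.71:ℝ)..3.1, 1/Real.log t) + (∫ t in (3.1:ℝ)..Real.exp 4, 1/Real.log t) = ∫ t in (2.71:ℝ)..Real.exp 4, 1/Real.log t :=
      intervalIntegral.integral_add_adjacent_intervals (invlog_integrable (by norm_num) (by norm_num)) (invlog_integrable (by norm_num) he4)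
    have hp : ∫ t in (2.71:ℝ)..3.1, 1/Real.log t ≤ (3.1 - 2.71) * (1/(155771/156250)) :=
      int_invlog_le (by norm_num) (by norm_num) (by norm_num) hL6
    have h3 : (3.1 - 2.71) * ((1:ℝ)/(155771/156250)) + (17862357/1000000) ≤ (18253557/1000000) := by norm_num
    linarith [hB7]
  have hB5 : ∫ t in (2.39:ℝ)..Real.exp 4, 1/Real.log t ≤ ((4655207/250000):ℝ) := by
    have hs : (∫ t in (2.39:ℝ)..2.71, 1/Real.log t) + (∫ t in (2.71:ℝ)..Real.exp 4, 1/Real.log t) = ∫ t in (2.39:ℝ)..Real.exp 4, 1/Real.log t :=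
      intervalIntegral.integral_add_adjacent_intervals (invlog_integrable (by norm_num) (by norm_num)) (invlog_integrable (by norm_num) he4)
    have hp : ∫ t in (2.39:ℝ)..2.71, 1/Real.log t ≤ (2.71 - 2.39) * (1/(8712923/10000000)) :=
      int_invlog_le (by norm_num) (by norm_num) (by norm_num) hL5
    have h3 : (2.71 - 2.39) * ((1:ℝ)/(8712923/10000000)) + (18253557/1000000) ≤ (4655207/250000) := by norm_num
    linarith [hB6]
  have hB4 : ∫ t in (2.13:ℝ)..Real.exp 4, 1/Real.log t ≤ ((1185293/62500):ℝ) := by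
    have hs : (∫ t in (2.13:ℝ)..2.39, 1/Real.log t) + (∫ t in (2.39:ℝ)..Real.exp 4, 1/Real.log t) = ∫ t in (2.13:ℝ)..Real.exp 4, 1/Real.log t :=
      intervalIntegral.integral_add_adjacent_intervals (invlog_integrable (by norm_num) (by norm_num)) (invlog_integrable (by norm_num) he4)
    have hp : ∫ t in (2.13:ℝ)..2.39, 1/Real.log t ≤ (2.39 - 2.13) * (1/(7561219/10000000)) :=
      int_invlog_le (by norm_num) (by norm_num) (by norm_num) hL4
    have h3 : (2.39 - 2.13) * ((1:ℝ)/(7561219/10000000)) + (4655207/250000) ≤ (1185293/62500) := by norm_num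
    linarith [hB5]
  have hB3 : ∫ t in (1.92:ℝ)..Real.exp 4, 1/Real.log t ≤ ((9643461/500000):ℝ) := by
    have hs : (∫ t in (1.92:ℝ)..2.13, 1/Real.log t) + (∫ t in (2.13:ℝ)..Real.exp 4, 1/Real.log t) = ∫ t in (1.92:ℝ)..Real.exp 4, 1/Real.log t :=
      intervalIntegral.integral_add_adjacent_intervals (invlog_integrable (by norm_num) (by norm_num)) (invlog_integrable (by norm_num) he4)
    have hp : ∫ t in (1.92:ℝ)..2.13, 1/Real.log t ≤ (2.13 - 1.92) * (1/(6517013/10000000)) :=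
      int_invlog_le (by norm_num) (by norm_num) (by norm_num) hL3
    have h3 : (2.13 - 1.92) * ((1:ℝ)/(6517013/10000000)) + (1185293/62500) ≤ (9643461/500000) := by norm_num
    linarith [hB4]
  have hB2 : ∫ t in (1.75:ℝ)..Real.exp 4, 1/Real.log t ≤ ((9795431/500000):ℝ) := by
    have hs : (∫ t in (1.75:ℝ)..1.92, 1/Real.log t) + (∫ t in (1.92:ℝ)..Real.exp 4, 1/Real.log t) = ∫ t in (1.75:ℝ)..Real.exp 4, 1/Real.log t :=
      intervalIntegral.integral_add_adjacent_intervals (invlog_integrable (by norm_num) (by norm_num)) (invlog_integrable (by norm_num) he4)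
    have hp : ∫ t in (1.75:ℝ)..1.92, 1/Real.log t ≤ (1.92 - 1.75) * (1/(279661/500000)) :=
      int_invlog_le (by norm_num) (by norm_num) (by norm_num) hL2
    have h3 : (1.92 - 1.75) * ((1:ℝ)/(279661/500000)) + (9643461/500000) ≤ (9795431/500000) := by norm_num
    linarith [hB3]
  have hB1 : ∫ t in (1.61:ℝ)..Real.exp 4, 1/Real.log t ≤ ((19884917/1000000):ℝ) := by
    have hs : (∫ t in (1.61:ℝ)..1.75, 1/Real.log t) + (∫ t in (1.75:ℝ)..Real.exp 4, 1/Real.log t) = ∫ t in (1.61:ℝ)..Real.exp 4, 1/Real.log t :=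
      intervalIntegral.integral_add_adjacent_intervals (invlog_integrable (by norm_num) (by norm_num)) (invlog_integrable (by norm_num) he4)
    have hp : ∫ t in (1.61:ℝ)..1.75, 1/Real.log t ≤ (1.75 - 1.61) * (1/(4761017/10000000)) :=
      int_invlog_le (by norm_num) (by norm_num) (by norm_num) hL1
    have h3 : (1.75 - 1.61) * ((1:ℝ)/(4761017/10000000)) + (9795431/500000) ≤ (19884917/1000000) := by norm_num
    linarith [hB2]
  have hB0 : ∫ t in (1.5:ℝ)..Real.exp 4, 1/Real.log t ≤ ((20156251/1000000):ℝ) := by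
    have hs : (∫ t in (1.5:ℝ)..1.61, 1/Real.log t) + (∫ t in (1.61:ℝ)..Real.exp 4, 1/Real.log t) = ∫ t in (1.5:ℝ)..Real.exp 4, 1/Real.log t :=
      intervalIntegral.integral_add_adjacent_intervals (invlog_integrable (by norm_num) (by norm_num)) (invlog_integrable (by norm_num) he4)
    have hp : ∫ t in (1.5:ℝ)..1.61, 1/Real.log t ≤ (1.61 - 1.5) * (1/(2027027/5000000)) :=
      int_invlog_le (by norm_num) (by norm_num) (by norm_num) hL0
    have h3 : (1.61 - 1.5) * ((1:ℝ)/(2027027/5000000)) + (19884917/1000000) ≤ (20156251/1000000) := by norm_num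
    linarith [hB1]
  linarith [hB0, show ((20156251/1000000):ℝ) ≤ 20.157 by norm_num]

/-- Numeric key estimate: `li (e⁴) < (3/8) e⁴`. -/
lemma li_exp4_lt : li (Real.exp 4) < 3/8 * Real.exp 4 := by
  obtain ⟨hlb4, hub4⟩ := exp4_bounds
  have he1 : (1:ℝ) < Real.exp 4 := by linarith
  rw [li_eq he1]
  -- split ∫_1^{e4} gli at 1.5
  have hadj : (∫ u in (1:ℝ)..1.5, gli u) + (∫ u in (1.5:ℝ)..Real.exp 4, gli u)
      = ∫ u in (1:ℝ)..Real.exp 4, gli u :=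
    intervalIntegral.integral_add_adjacent_intervals
      (gli_intervalIntegrable (by norm_num) (by norm_num))
      (gli_intervalIntegrable (by norm_num) (by linarith))
  -- relate ∫_{1.5}^{e4} gli to ∫_{1.5}^{e4} 1/log
  have hsplit : ∫ u in (1.5:ℝ)..Real.exp 4, 1/Real.log u
      = (∫ u in (1.5:ℝ)..Real.exp 4, gli u)
        + (Real.log (Real.exp 4 - 1) - Real.log (1.5 - 1)) := by
    have h1 : ∫ u in (1.5:ℝ)..Real.exp 4, 1/Real.log u
        = (∫ u in (1.5:ℝ)..Real.exp 4, gli u) + ∫ u in (1.5:ℝ)..Real.exp 4, 1/(u-1) := by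
      rw [← intervalIntegral.integral_add (gli_intervalIntegrable (by norm_num) (by linarith))
        (invsub_integrable_gt (by norm_num) he1)]
      apply intervalIntegral.integral_congr
      intro u _
      exact gli_add u
    rw [h1, int_invsub_gt (by norm_num) he1]
  -- bound ∫_0^1 gli ≤ log 2
  have hb1 : ∫ u in (0:ℝ)..1, gli u ≤ Real.log 2 := by
    rw [← int_invadd]
    apply intervalIntegral.integral_mono_on (by norm_num)
      (gli_intervalIntegrable le_rfl (by norm_num))
    · apply ContinuousOn.intervalIntegrable
      apply ContinuousOn.div continuousOn_const (by fun_prop)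
      intro u hu
      rw [Set.uIcc_of_le (by norm_num : (0:ℝ) ≤ 1)] at hu
      have := hu.1
      intro hc; linarith
    · intro u hu
      rcases hu with ⟨h0, h1⟩
      rcases eq_or_lt_of_le h0 with h | h
      · rw [← h]
        unfold gli
        norm_num
      rcases eq_or_lt_of_le h1 with h' | h'
      · rw [h']
        unfold gli
        norm_num
      · exact gli_le_inv h h'
  -- bound ∫_1^{1.5} gli ≤ 1/4
  have hb2 : ∫ u in (1:ℝ)..1.5, gli u ≤ 1/4 := by
    have hc : ∫ u in (1:ℝ)..1.5, (1/2 : ℝ) = 1/4 := by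
      rw [intervalIntegral.integral_const, smul_eq_mul]
      norm_num
    rw [← hc]
    apply intervalIntegral.integral_mono_on (by norm_num)
      (gli_intervalIntegrable (by norm_num) (by norm_num))
      intervalIntegrable_const
    intro u hu
    rcases hu with ⟨h1, _⟩
    rcases eq_or_lt_of_le h1 with h | h
    · rw [← h]
      unfold gli
      norm_num
    · exact gli_le_half h
  have hr := riemann_bound
  have hlhalf : Real.log (1.5 - 1) = -Real.log 2 := by
    have : (1.5 - 1 : ℝ) = 2⁻¹ := by norm_num
    rw [this, Real.log_inv]
  -- combine
  have hkey : (∫ u in (0:ℝ)..1, gli u) + (∫ u in (1:ℝ)..Real.exp 4, gli u)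
      + Real.log (Real.exp 4 - 1)
      ≤ Real.log 2 + 1/4 + (-Real.log 2) + 20.157 := by
    have := hsplit
    linarith [hadj, hb1, hb2, hr, hlhalf ▸ hsplit]
  have hfin : Real.log 2 + 1/4 + (-Real.log 2) + (20.157:ℝ) < 3/8 * Real.exp 4 := by
    have : (20.407:ℝ) < 3/8 * 54.5981 := by norm_num
    linarith
  linarith

theorem li_lt (x : ℝ) (hx : 1 < x) :
    li x < x / Real.log x + 2 * x / (Real.log x) ^ 2 := by
  obtain ⟨hlb4, hub4⟩ := exp4_bounds
  have he1 : (1:ℝ) < Real.exp 4 := by linarith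
  have h2 : (1:ℝ) < 2 := one_lt_two
  have hx2 : li x = li 2 + ∫ t in (2:ℝ)..x, 1/Real.log t := li_anchor hx h2
  have he2 : li (Real.exp 4) = li 2 + ∫ t in (2:ℝ)..Real.exp 4, 1/Real.log t :=
    li_anchor he1 h2
  have hmin := Gfun_min hx
  have hGe4 : Gfun (Real.exp 4)
      = 3/8 * Real.exp 4 - ∫ t in (2:ℝ)..Real.exp 4, 1/Real.log t := by
    unfold Gfun
    rw [Real.log_exp]
    ring
  have hGx : Gfun x = x / Real.log x + 2 * x / (Real.log x) ^ 2
      - ∫ t in (2:ℝ)..x, 1/Real.log t := by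
    unfold Gfun
    ring
  have hnum := li_exp4_lt
  -- li 2 < Gfun (exp 4) ≤ Gfun x, so li x = li 2 + (RHS - Gfun x) < RHS
  rw [hGe4] at hmin
  rw [hGx] at hmin
  linarith [hx2, he2, hnum]
end
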